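/- arXiv:1708.09579 — 3 statements merged into one kernel-verified Lean document; each statement's English description precedes it below -/
import Mathlib

section
/- Every 3-edge-connected graph contains an anchored chain cover. -/
/-- A finite multigraph; loops and parallel edges are allowed.  Every edge `e`
joins the two (possibly equal) vertices `fst e` and `snd e`; the functions
`fst`/`snd` also fix a reference orientation of each edge. -/
structure Multigraph where
  V : Type
  E : Type
  [fintypeV : Fintype V]
  [decEqV : DecidableEq V]
  [fintypeE : Fintype E]
  [decEqE : DecidableEq E]
  fst : E → V
  snd : E → V

attribute [instance] Multigraph.fintypeV Multigraph.decEqV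
attribute [instance] Multigraph.fintypeE Multigraph.decEqE

namespace Multigraph

variable (G : Multigraph)

/-- The edge `e` is incident with the vertex `v`. -/
def Inc (e : G.E) (v : G.V) : Prop :=
  G.fst e = v ∨ G.snd e = v

/-- The edge `e` joins the vertices `x` and `y` (in either order). -/
def Joins (e : G.E) (x y : G.V) : Prop :=
  (G.fst e = x ∧ G.snd e = y) ∨ (G.fst e = y ∧ G.snd e = x)

/-- The degree of a vertex; a loop contributes `2`. -/
def degree (v : G.V) : ℕ :=
  (Finset.univ.filter fun e => G.fst e = v).card +
    (Finset.univ.filter fun e => G.snd e = v).card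

/-- The set of edges with exactly one endpoint in the vertex set `A`. -/
def cut (A : Finset G.V) : Finset G.E :=
  Finset.univ.filter fun e =>
    (G.fst e ∈ A ∧ G.snd e ∉ A) ∨ (G.fst e ∉ A ∧ G.snd e ∈ A)

/-- A multigraph is `k`-edge-connected if it has at least two vertices and
every edge cut has at least `k` edges. -/
def EdgeConnected (k : ℕ) : Prop :=
  2 ≤ Fintype.card G.V ∧
    ∀ A : Finset G.V, A.Nonempty → A ≠ Finset.univ → k ≤ (G.cut A).card

end Multigraph

/-- A walk in a multigraph from `x` to `y`, as a sequence of incident edges. -/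
inductive Multigraph.Walk (G : Multigraph) : G.V → G.V → Type where
  | nil (v : G.V) : Multigraph.Walk G v v
  | cons {x y z : G.V} (e : G.E) (h : G.Joins e x y)
      (p : Multigraph.Walk G y z) : Multigraph.Walk G x z

/-- The list of edges of a walk. -/
def Multigraph.Walk.edges {G : Multigraph} :
    ∀ {x y : G.V}, G.Walk x y → List G.E
  | _, _, .nil _ => []
  | _, _, .cons e _ p => e :: p.edges

/-- `x` and `y` are connected by a walk all of whose edges satisfy `P`. -/
def Multigraph.ReachableIn (G : Multigraph) (P : G.E → Prop) (x y : G.V) : Prop :=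
  ∃ p : G.Walk x y, ∀ e ∈ p.edges, P e

namespace Multigraph

variable (G : Multigraph)

/-- The degree of `v` in the edge set `F`; loops count twice. -/
def degIn (F : Finset G.E) (v : G.V) : ℕ :=
  (F.filter fun e => G.fst e = v).card + (F.filter fun e => G.snd e = v).card

/-- The edge set `F` forms a single cycle (possibly a loop, or a pair of
parallel edges): it is nonempty, every vertex has degree `0` or `2` in `F`,
and all vertices met by `F` are connected to each other through `F`. -/
def IsCycleEdges (F : Finset G.E) : Prop :=
  F.Nonempty ∧ (∀ v : G.V, G.degIn F v = 0 ∨ G.degIn F v = 2) ∧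
    ∀ x y : G.V, 0 < G.degIn F x → 0 < G.degIn F y → G.ReachableIn (· ∈ F) x y

/-- There exist two edge-disjoint paths (trails) from `u` to `v` using only
edges from `F`. -/
def TwoEDP (F : Finset G.E) (u v : G.V) : Prop :=
  ∃ p q : G.Walk u v, p.edges.Nodup ∧ q.edges.Nodup ∧
    (∀ e ∈ p.edges, e ∉ q.edges) ∧
    (∀ e ∈ p.edges, e ∈ F) ∧ (∀ e ∈ q.edges, e ∈ F)

/-- The subgraph `(S, F)` of `G` is a `(u,v)`-chain: a subgraph-minimal
subgraph containing two edge-disjoint paths from `u` to `v`.  (Equivalently,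
a graph obtained from a `u`–`v` path by doubling all edges and subdividing
some of them; a single vertex `u` is a `(u,u)`-chain.) -/
def IsChain (S : Finset G.V) (F : Finset G.E) (u v : G.V) : Prop :=
  u ∈ S ∧ v ∈ S ∧ (∀ e ∈ F, G.fst e ∈ S ∧ G.snd e ∈ S) ∧ G.TwoEDP F u v ∧
    ∀ S', S' ⊆ S → ∀ F', F' ⊆ F → u ∈ S' → v ∈ S' →
      (∀ e ∈ F', G.fst e ∈ S' ∧ G.snd e ∈ S') → G.TwoEDP F' u v →
        S' = S ∧ F' = F

end Multigraph

/-- An anchored chain cover of `G`: vertex-disjoint chains `C_0, …, C_{k-1}`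
covering all vertices of `G`, where `C_0` is a cycle and, for `i ≥ 1`, the
chain `C_i` joining `endA i` to `endB i` is attached to the union of the
earlier chains by two distinct anchor edges. -/
structure Multigraph.AnchoredChainCover (G : Multigraph) where
  k : ℕ
  kpos : 0 < k
  S : Fin k → Finset G.V
  F : Fin k → Finset G.E
  endA : Fin k → G.V
  endB : Fin k → G.V
  anchor1 : Fin k → G.E
  anchor2 : Fin k → G.E
  chain : ∀ i : Fin k, G.IsChain (S i) (F i) (endA i) (endB i)
  first_cycle : G.IsCycleEdges (F ⟨0, kpos⟩)
  disj : ∀ i j : Fin k, i ≠ j → Disjoint (S i) (S j)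
  cover : ∀ x : G.V, ∃ i : Fin k, x ∈ S i
  anchor_ne : ∀ i : Fin k, i ≠ ⟨0, kpos⟩ → anchor1 i ≠ anchor2 i
  anchor1_spec : ∀ i : Fin k, i ≠ ⟨0, kpos⟩ →
    ∃ x : G.V, G.Joins (anchor1 i) (endA i) x ∧ ∃ j : Fin k, j < i ∧ x ∈ S j
  anchor2_spec : ∀ i : Fin k, i ≠ ⟨0, kpos⟩ →
    ∃ y : G.V, G.Joins (anchor2 i) (endB i) y ∧ ∃ j : Fin k, j < i ∧ y ∈ S j

namespace Multigraph.AnchoredChainCover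

variable {G : Multigraph} (c : G.AnchoredChainCover)

/-- The set of all edges of the chains of the cover. -/
def chainEdges : Finset G.E := Finset.univ.biUnion c.F

/-- The set of anchors of the cover. -/
def anchors : Finset G.E :=
  (Finset.univ.filter fun i : Fin c.k => i ≠ ⟨0, c.kpos⟩).biUnion
    fun i => {c.anchor1 i, c.anchor2 i}

/-- The external edges: the edges of `G` neither on a chain nor anchors. -/
def external : Finset G.E :=
  Finset.univ.filter fun e => e ∉ c.chainEdges ∧ e ∉ c.anchors

/-- The number of cycles contained in the union of the chains. -/
noncomputable def numCycles : ℕ :=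
  Nat.card {F' : Finset G.E // F' ⊆ c.chainEdges ∧ G.IsCycleEdges F'}

end Multigraph.AnchoredChainCover

namespace Multigraph

variable {G : Multigraph}

theorem Joins.symm {e : G.E} {x y : G.V} (h : G.Joins e x y) : G.Joins e y x := by
  rcases h with ⟨h1, h2⟩ | ⟨h1, h2⟩
  · exact Or.inr ⟨h1, h2⟩
  · exact Or.inl ⟨h1, h2⟩

theorem Joins.fst_or_snd_left {e : G.E} {x y : G.V} (h : G.Joins e x y) :
    G.fst e = x ∨ G.snd e = x := by
  rcases h with ⟨h1, h2⟩ | ⟨h1, h2⟩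
  · exact Or.inl h1
  · exact Or.inr h2

namespace Walk

/-- The support (list of visited vertices) of a walk. -/
def support : ∀ {x y : G.V}, G.Walk x y → List G.V
  | x, _, .nil _ => [x]
  | x, _, .cons _ _ p => x :: p.support

@[simp] theorem support_nil (v : G.V) : (Walk.nil (G := G) v).support = [v] := rfl

@[simp] theorem support_cons {x y z : G.V} (e : G.E) (h : G.Joins e x y)
    (p : G.Walk y z) : (Walk.cons e h p).support = x :: p.support := rfl

@[simp] theorem edges_nil (v : G.V) : (Walk.nil (G := G) v).edges = [] := rfl

@[simp] theorem edges_cons {x y z : G.V} (e : G.E) (h : G.Joins e x y)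
    (p : G.Walk y z) : (Walk.cons e h p).edges = e :: p.edges := rfl

theorem support_ne_nil {x y : G.V} (p : G.Walk x y) : p.support ≠ [] := by
  cases p <;> simp [support]

theorem support_head {x y : G.V} (p : G.Walk x y) :
    p.support = x :: p.support.tail := by
  cases p <;> rfl

theorem start_mem_support {x y : G.V} (p : G.Walk x y) : x ∈ p.support := by
  rw [support_head]; exact List.mem_cons_self

theorem end_mem_support {x y : G.V} (p : G.Walk x y) : y ∈ p.support := by
  induction p with
  | nil v => simp [support]
  | cons e h p ih => simp [support, ih]

theorem edges_endpoints_mem_support {x y : G.V} (p : G.Walk x y) {e : G.E}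
    (he : e ∈ p.edges) : G.fst e ∈ p.support ∧ G.snd e ∈ p.support := by
  induction p with
  | nil v => simp [edges] at he
  | @cons a b c f h p ih =>
    rw [edges_cons, List.mem_cons] at he
    simp only [support_cons, List.mem_cons]
    rcases he with rfl | he
    · rcases h with ⟨h1, h2⟩ | ⟨h1, h2⟩
      · exact ⟨Or.inl h1, Or.inr (h2 ▸ p.start_mem_support)⟩
      · exact ⟨Or.inr (h1 ▸ p.start_mem_support), Or.inl h2⟩
    · exact ⟨Or.inr (ih he).1, Or.inr (ih he).2⟩

theorem edge_endpoint_tail {x y : G.V} (p : G.Walk x y) {e : G.E}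
    (he : e ∈ p.edges) : ∃ t ∈ p.support.tail, G.fst e = t ∨ G.snd e = t := by
  induction p with
  | nil v => simp [edges] at he
  | @cons a b c f h p ih =>
    rw [edges_cons, List.mem_cons] at he
    rcases he with rfl | he
    · refine ⟨b, ?_, ?_⟩
      · show b ∈ p.support
        exact p.start_mem_support
      · rcases h with ⟨h1, h2⟩ | ⟨h1, h2⟩
        · exact Or.inr h2
        · exact Or.inl h1
    · obtain ⟨t, ht, h2⟩ := ih he
      refine ⟨t, ?_, h2⟩
      show t ∈ p.support
      rw [p.support_head]
      exact List.mem_cons_of_mem _ ht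

/-- Append two walks. -/
def append : ∀ {x y z : G.V}, G.Walk x y → G.Walk y z → G.Walk x z
  | _, _, _, .nil _, q => q
  | _, _, _, .cons e h p, q => .cons e h (p.append q)

@[simp] theorem edges_append {x y z : G.V} (p : G.Walk x y) (q : G.Walk y z) :
    (p.append q).edges = p.edges ++ q.edges := by
  induction p with
  | nil v => rfl
  | cons e h p ih => simp [append, ih]

theorem support_append {x y z : G.V} (p : G.Walk x y) (q : G.Walk y z) :
    (p.append q).support = p.support ++ q.support.tail := by
  induction p with
  | nil v => simpa [append] using q.support_head
  | cons e h p ih => simp [append, ih]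

/-- Reverse a walk. -/
def reverse : ∀ {x y : G.V}, G.Walk x y → G.Walk y x
  | _, _, .nil v => .nil v
  | _, _, .cons e h p => p.reverse.append (.cons e h.symm (.nil _))

@[simp] theorem edges_reverse {x y : G.V} (p : G.Walk x y) :
    p.reverse.edges = p.edges.reverse := by
  induction p with
  | nil v => rfl
  | cons e h p ih => simp [reverse, ih]

/-- Split a walk at a vertex of its support. -/
theorem split_at {x y : G.V} (p : G.Walk x y) {v : G.V} (hv : v ∈ p.support) :
    ∃ (q : G.Walk x v) (r : G.Walk v y), p.edges = q.edges ++ r.edges ∧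
      p.support = q.support ++ r.support.tail := by
  induction p with
  | nil w =>
    simp [support] at hv
    subst hv
    exact ⟨.nil _, .nil _, by simp, by simp [support]⟩
  | @cons a b c e h p ih =>
    rw [support_cons, List.mem_cons] at hv
    rcases eq_or_ne v a with rfl | hne
    · exact ⟨.nil _, .cons e h p, by simp, by simp⟩
    · obtain ⟨q, r, he, hs⟩ := ih (hv.resolve_left hne)
      exact ⟨.cons e h q, r, by simp [he], by simp [hs]⟩

/-- Split a walk at (the first occurrence of) an edge. -/
theorem split_at_edge {x y : G.V} (p : G.Walk x y) {e : G.E} (he : e ∈ p.edges) :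
    ∃ (c d : G.V) (_ : G.Joins e c d) (q : G.Walk x c) (r : G.Walk d y),
      p.edges = q.edges ++ e :: r.edges := by
  induction p with
  | nil w => simp at he
  | @cons a b c f h p ih =>
    rw [edges_cons, List.mem_cons] at he
    rcases eq_or_ne e f with rfl | hne
    · exact ⟨a, b, h, .nil _, p, by simp⟩
    · obtain ⟨c', d', hj, q, r, hq⟩ := ih (he.resolve_left hne)
      exact ⟨c', d', hj, .cons f h q, r, by simp [hq]⟩

/-- Every walk can be replaced by one with no repeated vertices. -/
theorem exists_nodup {x y : G.V} (p : G.Walk x y) :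
    ∃ q : G.Walk x y, q.support.Nodup ∧ ∀ e ∈ q.edges, e ∈ p.edges := by
  induction p with
  | nil w => exact ⟨.nil _, by simp [support], by simp⟩
  | @cons a b c e h p ih =>
    obtain ⟨q, hnd, hsub⟩ := ih
    by_cases ha : a ∈ q.support
    · obtain ⟨q1, r, hedg, hsup⟩ := q.split_at ha
      refine ⟨r, ?_, fun f hf => List.mem_cons_of_mem _ (hsub f (hedg ▸ List.mem_append_right _ hf))⟩
      rw [hsup] at hnd
      have h1 : r.support.tail.Nodup := (List.nodup_append'.mp hnd).2.1
      have h2 : a ∉ r.support.tail := fun hmem =>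
        (List.nodup_append'.mp hnd).2.2 (q1.end_mem_support) hmem
      rw [r.support_head]
      exact List.nodup_cons.mpr ⟨h2, h1⟩
    · exact ⟨.cons e h q, by simp [hnd, ha], by
        intro f hf
        rw [edges_cons, List.mem_cons] at hf ⊢
        rcases hf with rfl | hf
        · exact Or.inl rfl
        · exact Or.inr (hsub f hf)⟩

/-- A walk with no repeated vertices has no repeated edges. -/
theorem edges_nodup_of_support_nodup {x y : G.V} (p : G.Walk x y)
    (h : p.support.Nodup) : p.edges.Nodup := by
  induction p with
  | nil w => simp
  | @cons a b c e hj p ih =>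
    rw [support_cons, List.nodup_cons] at h
    rw [edges_cons, List.nodup_cons]
    refine ⟨fun he => ?_, ih h.2⟩
    have := p.edges_endpoints_mem_support he
    rcases hj.fst_or_snd_left with h1 | h1
    · exact h.1 (h1 ▸ this.1)
    · exact h.1 (h1 ▸ this.2)

/-- The last visit of a walk to a vertex set `X`. -/
theorem exists_last_in {x y : G.V} (p : G.Walk x y) (X : Finset G.V)
    (hx : ∃ v ∈ p.support, v ∈ X) :
    ∃ w, w ∈ X ∧ ∃ r : G.Walk w y, r.edges.Sublist p.edges ∧
      ∀ t ∈ r.support.tail, t ∉ X := by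
  induction p with
  | nil w =>
    obtain ⟨v, hv, hvX⟩ := hx
    simp [support] at hv
    subst hv
    exact ⟨v, hvX, .nil _, by simp, by simp [support]⟩
  | @cons a b c e h p ih =>
    by_cases hp : ∃ v ∈ p.support, v ∈ X
    · obtain ⟨w, hw, r, hsub, htail⟩ := ih hp
      exact ⟨w, hw, r, hsub.trans (List.sublist_cons_self _ _), htail⟩
    · obtain ⟨v, hv, hvX⟩ := hx
      rw [support_cons, List.mem_cons] at hv
      rcases hv with rfl | hv
      · refine ⟨v, hvX, .cons e h p, List.Sublist.refl _, fun t ht htX => hp ⟨t, ht, htX⟩⟩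
      · exact absurd ⟨v, hv, hvX⟩ hp

/-- A walk from inside `A` to outside `A` contains an edge crossing `A`. -/
theorem exists_crossing {x y : G.V} (p : G.Walk x y) (A : Finset G.V)
    (hx : x ∈ A) (hy : y ∉ A) :
    ∃ e ∈ p.edges, (G.fst e ∈ A ∧ G.snd e ∉ A) ∨ (G.fst e ∉ A ∧ G.snd e ∈ A) := by
  induction p with
  | nil w => exact absurd hx hy
  | @cons a b c e h p ih =>
    by_cases hb : b ∈ A
    · obtain ⟨f, hf, hcross⟩ := ih hb hy
      exact ⟨f, List.mem_cons_of_mem _ hf, hcross⟩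
    · refine ⟨e, List.mem_cons_self, ?_⟩
      rcases h with ⟨h1, h2⟩ | ⟨h1, h2⟩
      · exact Or.inl ⟨h1 ▸ hx, h2 ▸ hb⟩
      · exact Or.inr ⟨h1 ▸ hb, h2 ▸ hx⟩

end Walk

end Multigraph
namespace Multigraph

variable {G : Multigraph}

section Reach

variable {E0 : Finset G.E}

/-- Reachability within an edge set, abbreviated. -/
def Reach (G : Multigraph) (E0 : Finset G.E) (x y : G.V) : Prop :=
  G.ReachableIn (· ∈ E0) x y

theorem Reach.refl (x : G.V) : G.Reach E0 x x := ⟨.nil x, by simp⟩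

theorem Reach.trans {x y z : G.V} (h1 : G.Reach E0 x y) (h2 : G.Reach E0 y z) :
    G.Reach E0 x z := by
  obtain ⟨p, hp⟩ := h1
  obtain ⟨q, hq⟩ := h2
  refine ⟨p.append q, ?_⟩
  intro e he
  rw [Walk.edges_append, List.mem_append] at he
  exact he.elim (hp e) (hq e)

theorem Reach.symm {x y : G.V} (h : G.Reach E0 x y) : G.Reach E0 y x := by
  obtain ⟨p, hp⟩ := h
  refine ⟨p.reverse, ?_⟩
  intro e he
  rw [Walk.edges_reverse, List.mem_reverse] at he
  exact hp e he

theorem Reach.single {e : G.E} {x y : G.V} (hj : G.Joins e x y) (he : e ∈ E0) :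
    G.Reach E0 x y := ⟨.cons e hj (.nil y), by simpa using he⟩

/-- If every set separating `u` from `v` is crossed by an `E0`-edge, then `u`
and `v` are joined by an `E0`-walk. -/
theorem reach_of_cut {u v : G.V}
    (h : ∀ A : Finset G.V, u ∈ A → v ∉ A → ∃ e ∈ E0,
      (G.fst e ∈ A ∧ G.snd e ∉ A) ∨ (G.fst e ∉ A ∧ G.snd e ∈ A)) :
    G.Reach E0 u v := by
  classical
  by_contra hv
  set A : Finset G.V := Finset.univ.filter (fun y => G.Reach E0 u y) with hA
  have hmem : ∀ y, y ∈ A ↔ G.Reach E0 u y := by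
    intro y; simp [hA]
  obtain ⟨e, heE, hcross⟩ := h A ((hmem u).mpr (Reach.refl u)) (fun hc => hv ((hmem v).mp hc))
  rcases hcross with ⟨h1, h2⟩ | ⟨h1, h2⟩
  · exact h2 ((hmem _).mpr (((hmem _).mp h1).trans (Reach.single (Or.inl ⟨rfl, rfl⟩) heE)))
  · exact h1 ((hmem _).mpr (((hmem _).mp h2).trans (Reach.single (Or.inr ⟨rfl, rfl⟩) heE)))

end Reach

section Deg

/-- The degree of a vertex in a list of edges; loops count twice. -/
def listDeg (G : Multigraph) (v : G.V) (l : List G.E) : ℕ :=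
  (l.filter (fun e => G.fst e = v)).length + (l.filter (fun e => G.snd e = v)).length

@[simp] theorem listDeg_nil (v : G.V) : G.listDeg v [] = 0 := rfl

theorem listDeg_cons (v : G.V) (e : G.E) (l : List G.E) :
    G.listDeg v (e :: l) = ((if G.fst e = v then 1 else 0) +
      (if G.snd e = v then 1 else 0)) + G.listDeg v l := by
  simp only [listDeg, List.filter_cons]
  by_cases h1 : G.fst e = v <;> by_cases h2 : G.snd e = v <;>
    simp [h1, h2] <;> omega

theorem listDeg_append (v : G.V) (l1 l2 : List G.E) :
    G.listDeg v (l1 ++ l2) = G.listDeg v l1 + G.listDeg v l2 := by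
  simp only [listDeg, List.filter_append, List.length_append]
  omega

theorem inc_eq_of_joins {e : G.E} {x y v : G.V} (h : G.Joins e x y) :
    (if G.fst e = v then 1 else 0) + (if G.snd e = v then 1 else 0)
      = (if x = v then 1 else 0) + (if y = v then 1 else 0) := by
  rcases h with ⟨h1, h2⟩ | ⟨h1, h2⟩ <;> subst h1 <;> subst h2 <;> omega

/-- Parity of walk degrees. -/
theorem listDeg_walk_parity {x y : G.V} (p : G.Walk x y) (v : G.V) :
    G.listDeg v p.edges % 2
      = ((if x = v then 1 else 0) + (if y = v then 1 else 0)) % 2 := by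
  induction p with
  | nil w => by_cases h : w = v <;> simp [h]
  | @cons a b c e h p ih =>
    rw [Walk.edges_cons, listDeg_cons, inc_eq_of_joins h]
    omega

/-- Exact degrees along a walk with no repeated vertices. -/
theorem listDeg_walk_nodup {x y : G.V} (p : G.Walk x y) (h : p.support.Nodup)
    (v : G.V) :
    G.listDeg v p.edges + (if x = v then 1 else 0) + (if y = v then 1 else 0)
      = 2 * (if v ∈ p.support then 1 else 0) := by
  induction p with
  | nil w =>
    by_cases h : w = v
    · subst h; simp
    · rw [Walk.support_nil, Walk.edges_nil, listDeg_nil, if_neg h,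
        if_neg (fun hc : v ∈ [w] => h (List.mem_singleton.mp hc).symm)]
  | @cons a b c e hj p ih =>
    rw [Walk.support_cons, List.nodup_cons] at h
    have ihh := ih h.2
    rw [Walk.edges_cons, listDeg_cons, inc_eq_of_joins hj]
    by_cases hva : a = v
    · have hvs : v ∉ p.support := hva ▸ h.1
      have hbv : ¬ (b = v) := fun hb => hvs (hb ▸ p.start_mem_support)
      have hcv : ¬ (c = v) := fun hc => hvs (hc ▸ p.end_mem_support)
      rw [if_neg hbv, if_neg hcv, if_neg hvs] at ihh
      rw [Walk.support_cons, if_pos hva, if_neg hbv, if_neg hcv,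
        if_pos (List.mem_cons.mpr (Or.inl hva.symm))]
      omega
    · by_cases hvp : v ∈ p.support
      · rw [if_pos hvp] at ihh
        rw [Walk.support_cons, if_neg hva,
          if_pos (List.mem_cons_of_mem _ hvp : v ∈ a :: p.support)]
        omega
      · have hnv : v ∉ a :: p.support := fun hm =>
          (List.mem_cons.mp hm).elim (fun h' => hva h'.symm) hvp
        have hbv : ¬ (b = v) := fun hb => hvp (hb ▸ p.start_mem_support)
        have hcv : ¬ (c = v) := fun hc => hvp (hc ▸ p.end_mem_support)
        rw [if_neg hbv, if_neg hcv, if_neg hvp] at ihh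
        rw [Walk.support_cons, if_neg hva, if_neg hbv, if_neg hcv, if_neg hnv]
        omega

theorem card_filter_toFinset_aux {α : Type} [DecidableEq α] {l : List α} (hl : l.Nodup)
    (p : α → Prop) [DecidablePred p] :
    (l.toFinset.filter p).card = (l.filter (fun a => decide (p a))).length := by
  induction l with
  | nil => simp
  | cons a l ih =>
    rw [List.nodup_cons] at hl
    rw [List.toFinset_cons, Finset.filter_insert]
    by_cases hp : p a
    · rw [if_pos hp, Finset.card_insert_of_notMem
        (by simp [Finset.mem_filter, List.mem_toFinset, hl.1]),
        List.filter_cons_of_pos (by simpa using hp), List.length_cons, ih hl.2]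
    · rw [if_neg hp, List.filter_cons_of_neg (by simpa using hp), ih hl.2]

theorem degIn_toFinset {l : List G.E} (hl : l.Nodup) (v : G.V) :
    G.degIn l.toFinset v = G.listDeg v l := by
  classical
  rw [degIn, listDeg]
  rw [card_filter_toFinset_aux hl, card_filter_toFinset_aux hl]

theorem degIn_mono {D F : Finset G.E} (h : D ⊆ F) (v : G.V) :
    G.degIn D v ≤ G.degIn F v := by
  exact Nat.add_le_add (Finset.card_le_card (Finset.filter_subset_filter _ h))
    (Finset.card_le_card (Finset.filter_subset_filter _ h))

theorem degIn_union {D1 D2 : Finset G.E} (h : Disjoint D1 D2) (v : G.V) :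
    G.degIn (D1 ∪ D2) v = G.degIn D1 v + G.degIn D2 v := by
  rw [degIn, degIn, degIn, Finset.filter_union, Finset.filter_union,
    Finset.card_union_of_disjoint (h.mono (Finset.filter_subset _ _) (Finset.filter_subset _ _)),
    Finset.card_union_of_disjoint (h.mono (Finset.filter_subset _ _) (Finset.filter_subset _ _))]
  omega

theorem degIn_pos {D : Finset G.E} {e : G.E} {v : G.V} (he : e ∈ D)
    (hv : G.fst e = v ∨ G.snd e = v) : 0 < G.degIn D v := by
  rcases hv with hv | hv
  · have : e ∈ D.filter (fun e => G.fst e = v) := Finset.mem_filter.mpr ⟨he, hv⟩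
    have := Finset.card_pos.mpr ⟨e, this⟩
    rw [degIn]; omega
  · have : e ∈ D.filter (fun e => G.snd e = v) := Finset.mem_filter.mpr ⟨he, hv⟩
    have := Finset.card_pos.mpr ⟨e, this⟩
    rw [degIn]; omega

theorem mem_of_degIn_eq {D F : Finset G.E} (hDF : D ⊆ F) {v : G.V}
    (h : G.degIn D v = G.degIn F v) {e : G.E} (he : e ∈ F)
    (hv : G.fst e = v ∨ G.snd e = v) : e ∈ D := by
  rw [degIn, degIn] at h
  have h1 : (D.filter (fun e => G.fst e = v)).card ≤ (F.filter (fun e => G.fst e = v)).card :=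
    Finset.card_le_card (Finset.filter_subset_filter _ hDF)
  have h2 : (D.filter (fun e => G.snd e = v)).card ≤ (F.filter (fun e => G.snd e = v)).card :=
    Finset.card_le_card (Finset.filter_subset_filter _ hDF)
  have e1 : F.filter (fun e => G.fst e = v) = D.filter (fun e => G.fst e = v) :=
    (Finset.eq_of_subset_of_card_le (Finset.filter_subset_filter _ hDF) (by omega)).symm
  have e2 : F.filter (fun e => G.snd e = v) = D.filter (fun e => G.snd e = v) :=
    (Finset.eq_of_subset_of_card_le (Finset.filter_subset_filter _ hDF) (by omega)).symm
  rcases hv with hv | hv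
  · exact (Finset.mem_filter.mp (e1 ▸ Finset.mem_filter.mpr ⟨he, hv⟩)).1
  · exact (Finset.mem_filter.mp (e2 ▸ Finset.mem_filter.mpr ⟨he, hv⟩)).1

theorem exists_incident_of_degIn_pos {D : Finset G.E} {v : G.V}
    (h : 0 < G.degIn D v) : ∃ e ∈ D, G.fst e = v ∨ G.snd e = v := by
  rw [degIn] at h
  by_cases h1 : (D.filter (fun e => G.fst e = v)).Nonempty
  · obtain ⟨e, he⟩ := h1
    rw [Finset.mem_filter] at he
    exact ⟨e, he.1, Or.inl he.2⟩
  · rw [Finset.not_nonempty_iff_eq_empty] at h1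
    rw [h1] at h
    have : (D.filter (fun e => G.snd e = v)).Nonempty := Finset.card_pos.mp (by simpa using h)
    obtain ⟨e, he⟩ := this
    rw [Finset.mem_filter] at he
    exact ⟨e, he.1, Or.inr he.2⟩

end Deg

end Multigraph
namespace Multigraph

variable {G : Multigraph}

/-- `e` crosses the vertex set `A`. -/
def Cross (G : Multigraph) (A : Finset G.V) (e : G.E) : Prop :=
  (G.fst e ∈ A ∧ G.snd e ∉ A) ∨ (G.fst e ∉ A ∧ G.snd e ∈ A)

theorem twoEDP_self (F : Finset G.E) (u : G.V) : G.TwoEDP F u u :=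
  ⟨.nil u, .nil u, by simp, by simp, by simp, by simp, by simp⟩

theorem joins_pair {e : G.E} {a b a' b' : G.V} (h : G.Joins e a b)
    (h' : G.Joins e a' b') : (a' = a ∧ b' = b) ∨ (a' = b ∧ b' = a) := by
  rcases h with ⟨h1, h2⟩ | ⟨h1, h2⟩ <;> rcases h' with ⟨h3, h4⟩ | ⟨h3, h4⟩ <;>
    subst h1 <;> subst h2 <;> simp [← h3, ← h4]

theorem Walk.exists_cons_of_ne {x y : G.V} (p : G.Walk x y) (h : x ≠ y) :
    ∃ (z : G.V) (e : G.E) (hj : G.Joins e x z) (q : G.Walk z y),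
      p.edges = e :: q.edges := by
  cases p with
  | nil => exact absurd rfl h
  | cons e hj q => exact ⟨_, e, hj, q, rfl⟩

theorem Walk.split_at_edge_joins {x y a b : G.V} (p : G.Walk x y) {e : G.E}
    (he : e ∈ p.edges) (hj : G.Joins e a b) :
    (∃ (q : G.Walk x a) (r : G.Walk b y), p.edges = q.edges ++ e :: r.edges) ∨
    (∃ (q : G.Walk x b) (r : G.Walk a y), p.edges = q.edges ++ e :: r.edges) := by
  induction p with
  | nil => simp at he
  | @cons x' b' y' f hf p ih =>
    rw [Walk.edges_cons, List.mem_cons] at he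
    rcases eq_or_ne e f with rfl | hne
    · rcases joins_pair hj hf with ⟨h1, h2⟩ | ⟨h1, h2⟩
      · subst h1; subst h2
        exact Or.inl ⟨.nil _, p, by simp⟩
      · subst h1; subst h2
        exact Or.inr ⟨.nil _, p, by simp⟩
    · rcases ih (he.resolve_left hne) with ⟨q, r, hq⟩ | ⟨q, r, hq⟩
      · exact Or.inl ⟨.cons f hf q, r, by simp [hq]⟩
      · exact Or.inr ⟨.cons f hf q, r, by simp [hq]⟩

section Combine

variable {E0 : Finset G.E} {u z v : G.V} (e : G.E)

/-- Combination step of the Menger argument: the new edge lies on one of the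
two trails. -/
theorem combine_edge (he0 : e ∈ E0) (hj : G.Joins e z v)
    (p q : G.Walk u z) (hpnd : p.edges.Nodup) (hqnd : q.edges.Nodup)
    (hdisj : ∀ f ∈ p.edges, f ∉ q.edges)
    (hpE : ∀ f ∈ p.edges, f ∈ E0) (hqE : ∀ f ∈ q.edges, f ∈ E0)
    (hep : e ∈ p.edges) : G.TwoEDP E0 u v := by
  rcases p.split_at_edge_joins hep hj with ⟨r1, r2, hedges⟩ | ⟨r1, r2, hedges⟩
  · -- r1 : Walk u z, r2 : Walk v z
    have hnd : (r1.edges ++ e :: r2.edges).Nodup := hedges ▸ hpnd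
    rw [List.nodup_append'] at hnd
    obtain ⟨hnd1, hnd2', hdisj12'⟩ := hnd
    rw [List.nodup_cons] at hnd2'
    obtain ⟨her2, hnd2⟩ := hnd2'
    have her1 : e ∉ r1.edges := fun hc => hdisj12' hc (List.mem_cons_self)
    have hr1p : ∀ f ∈ r1.edges, f ∈ p.edges := fun f hf =>
      hedges ▸ List.mem_append_left _ hf
    have hr2p : ∀ f ∈ r2.edges, f ∈ p.edges := fun f hf =>
      hedges ▸ List.mem_append_right _ (List.mem_cons_of_mem _ hf)
    have hdisj12 : ∀ f ∈ r1.edges, f ∉ r2.edges := fun f hf hc =>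
      hdisj12' hf (List.mem_cons_of_mem _ hc)
    refine ⟨r1.append (.cons e hj (.nil v)), q.append r2.reverse, ?_, ?_, ?_, ?_, ?_⟩
    · simp only [Walk.edges_append, Walk.edges_cons, Walk.edges_nil]
      rw [List.nodup_append']
      exact ⟨hnd1, List.nodup_cons.mpr ⟨by simp, List.nodup_nil⟩,
        fun f hf hc => her1 ((List.mem_singleton.mp (by simpa using hc)) ▸ hf)⟩
    · simp only [Walk.edges_append, Walk.edges_reverse]
      rw [List.nodup_append']
      exact ⟨hqnd, List.nodup_reverse.mpr hnd2, fun f hf hc =>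
        hdisj f (hr2p f (List.mem_reverse.mp hc)) hf⟩
    · intro f hf
      simp only [Walk.edges_append, Walk.edges_cons, Walk.edges_nil,
        Walk.edges_reverse, List.mem_append, List.mem_cons, List.mem_reverse,
        List.not_mem_nil, or_false] at hf ⊢
      rcases hf with hf | rfl
      · push_neg
        exact ⟨fun hc => hdisj f (hr1p f hf) hc, fun hc => hdisj12 f hf hc⟩
      · push_neg
        exact ⟨fun hc => hdisj f hep hc, her2⟩
    · intro f hf
      simp only [Walk.edges_append, Walk.edges_cons, Walk.edges_nil,
        List.mem_append, List.mem_cons, List.not_mem_nil, or_false] at hf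
      rcases hf with hf | rfl
      · exact hpE f (hr1p f hf)
      · exact he0
    · intro f hf
      simp only [Walk.edges_append, Walk.edges_reverse, List.mem_append,
        List.mem_reverse] at hf
      rcases hf with hf | hf
      · exact hqE f hf
      · exact hpE f (hr2p f hf)
  · -- r1 : Walk u v, r2 : Walk z z
    have hnd : (r1.edges ++ e :: r2.edges).Nodup := hedges ▸ hpnd
    rw [List.nodup_append'] at hnd
    obtain ⟨hnd1, hnd2', hdisj12'⟩ := hnd
    have her1 : e ∉ r1.edges := fun hc => hdisj12' hc (List.mem_cons_self)
    have hr1p : ∀ f ∈ r1.edges, f ∈ p.edges := fun f hf =>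
      hedges ▸ List.mem_append_left _ hf
    refine ⟨r1, q.append (.cons e hj (.nil v)), hnd1, ?_, ?_, ?_, ?_⟩
    · simp only [Walk.edges_append, Walk.edges_cons, Walk.edges_nil]
      rw [List.nodup_append']
      exact ⟨hqnd, List.nodup_cons.mpr ⟨by simp, List.nodup_nil⟩,
        fun f hf hc => hdisj e hep ((List.mem_singleton.mp (by simpa using hc)) ▸ hf)⟩
    · intro f hf
      simp only [Walk.edges_append, Walk.edges_cons, Walk.edges_nil,
        List.mem_append, List.mem_cons, List.not_mem_nil, or_false]
      push_neg
      exact ⟨fun hc => hdisj f (hr1p f hf) hc, fun hc => her1 (hc ▸ hf)⟩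
    · exact fun f hf => hpE f (hr1p f hf)
    · intro f hf
      simp only [Walk.edges_append, Walk.edges_cons, Walk.edges_nil,
        List.mem_append, List.mem_cons, List.not_mem_nil, or_false] at hf
      rcases hf with hf | rfl
      · exact hqE f hf
      · exact he0

/-- Combination step of the Menger argument: detour through a fresh path. -/
theorem combine_detour {w : G.V} (he0 : e ∈ E0) (hj : G.Joins e z v)
    (p q : G.Walk u z) (hpnd : p.edges.Nodup) (hqnd : q.edges.Nodup)
    (hdisj : ∀ f ∈ p.edges, f ∉ q.edges)
    (hpE : ∀ f ∈ p.edges, f ∈ E0) (hqE : ∀ f ∈ q.edges, f ∈ E0)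
    (hep : e ∉ p.edges) (heq : e ∉ q.edges)
    (r2 : G.Walk w v) (hwp : w ∈ p.support) (hr2nd : r2.edges.Nodup)
    (hr2e : e ∉ r2.edges) (hr2E : ∀ f ∈ r2.edges, f ∈ E0)
    (htail : ∀ t ∈ r2.support.tail, t ∉ p.support ∧ t ∉ q.support) :
    G.TwoEDP E0 u v := by
  obtain ⟨p1, p2, hedges, _⟩ := p.split_at hwp
  have hndp : (p1.edges ++ p2.edges).Nodup := hedges ▸ hpnd
  rw [List.nodup_append'] at hndp
  have hp1p : ∀ f ∈ p1.edges, f ∈ p.edges := fun f hf =>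
    hedges ▸ List.mem_append_left _ hf
  have hr2p : ∀ f ∈ r2.edges, f ∉ p.edges := by
    intro f hf hc
    obtain ⟨t, ht, hend⟩ := r2.edge_endpoint_tail hf
    have hmem := p.edges_endpoints_mem_support hc
    rcases hend with hend | hend
    · exact (htail t ht).1 (hend ▸ hmem.1)
    · exact (htail t ht).1 (hend ▸ hmem.2)
  have hr2q : ∀ f ∈ r2.edges, f ∉ q.edges := by
    intro f hf hc
    obtain ⟨t, ht, hend⟩ := r2.edge_endpoint_tail hf
    have hmem := q.edges_endpoints_mem_support hc
    rcases hend with hend | hend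
    · exact (htail t ht).2 (hend ▸ hmem.1)
    · exact (htail t ht).2 (hend ▸ hmem.2)
  refine ⟨p1.append r2, q.append (.cons e hj (.nil v)), ?_, ?_, ?_, ?_, ?_⟩
  · simp only [Walk.edges_append]
    rw [List.nodup_append']
    exact ⟨hndp.1, hr2nd, fun f hf hc => hr2p f hc (hp1p f hf)⟩
  · simp only [Walk.edges_append, Walk.edges_cons, Walk.edges_nil]
    rw [List.nodup_append']
    exact ⟨hqnd, List.nodup_cons.mpr ⟨by simp, List.nodup_nil⟩,
      fun f hf hc => heq ((List.mem_singleton.mp (by simpa using hc)) ▸ hf)⟩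
  · intro f hf
    simp only [Walk.edges_append, Walk.edges_cons, Walk.edges_nil,
      List.mem_append, List.mem_cons, List.not_mem_nil, or_false] at hf ⊢
    push_neg
    rcases hf with hf | hf
    · exact ⟨fun hc => hdisj f (hp1p f hf) hc, fun hc => hep (hc ▸ hp1p f hf)⟩
    · exact ⟨fun hc => hr2q f hf hc, fun hc => hr2e (hc ▸ hf)⟩
  · intro f hf
    simp only [Walk.edges_append, List.mem_append] at hf
    rcases hf with hf | hf
    · exact hpE f (hp1p f hf)
    · exact hr2E f hf
  · intro f hf
    simp only [Walk.edges_append, Walk.edges_cons, Walk.edges_nil,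
      List.mem_append, List.mem_cons, List.not_mem_nil, or_false] at hf
    rcases hf with hf | rfl
    · exact hqE f hf
    · exact he0

end Combine

/-- Edge-Menger theorem for two edge-disjoint trails. -/
theorem menger2_aux (E0 : Finset G.E) :
    ∀ (n : ℕ) (u v : G.V),
      (∀ A : Finset G.V, u ∈ A → v ∉ A →
        ∃ e1 ∈ E0, ∃ e2 ∈ E0, e1 ≠ e2 ∧ G.Cross A e1 ∧ G.Cross A e2) →
      (∃ p : G.Walk u v, (∀ f ∈ p.edges, f ∈ E0) ∧ p.edges.length ≤ n) →
      G.TwoEDP E0 u v := by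
  classical
  intro n
  induction n with
  | zero =>
    rintro u v hcut ⟨p, hpE, hlen⟩
    cases p with
    | nil => exact twoEDP_self E0 u
    | cons e hj q => simp at hlen
  | succ n ih =>
    rintro u v hcut ⟨pw, hpwE, hpwlen⟩
    by_cases huv : u = v
    · subst huv; exact twoEDP_self E0 u
    -- minimal length walk
    set P : ℕ → Prop := fun m =>
      ∃ p : G.Walk u v, (∀ f ∈ p.edges, f ∈ E0) ∧ p.edges.length = m with hPdef
    have hP : ∃ m, P m := ⟨_, pw, hpwE, rfl⟩
    set L := Nat.find hP with hLdef
    obtain ⟨p0, hp0E, hp0len⟩ : P L := Nat.find_spec hP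
    have hLle : L ≤ n + 1 := Nat.find_min' hP ⟨pw, hpwE, rfl⟩ |>.trans hpwlen
    have hmin : ∀ (q : G.Walk u v), (∀ f ∈ q.edges, f ∈ E0) →
        L ≤ q.edges.length := fun q hq => Nat.find_min' hP ⟨q, hq, rfl⟩
    -- peel the last edge
    obtain ⟨z, e, hj, q', hq'edges⟩ := p0.reverse.exists_cons_of_ne (Ne.symm huv)
    have hrevE : ∀ f ∈ p0.reverse.edges, f ∈ E0 := by
      intro f hf
      rw [Walk.edges_reverse, List.mem_reverse] at hf
      exact hp0E f hf
    have he0 : e ∈ E0 := hrevE e (hq'edges ▸ List.mem_cons_self)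
    have hq'E : ∀ f ∈ q'.edges, f ∈ E0 := fun f hf =>
      hrevE f (hq'edges ▸ List.mem_cons_of_mem _ hf)
    have hq'len : q'.edges.length = L - 1 ∧ 1 ≤ L := by
      have : p0.reverse.edges.length = L := by
        rw [Walk.edges_reverse, List.length_reverse, hp0len]
      rw [hq'edges] at this
      simp at this
      omega
    -- the short walk from u to z
    have hwE : ∀ f ∈ q'.reverse.edges, f ∈ E0 := by
      intro f hf
      rw [Walk.edges_reverse, List.mem_reverse] at hf
      exact hq'E f hf
    have hwlen : q'.reverse.edges.length = L - 1 := by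
      rw [Walk.edges_reverse, List.length_reverse]; exact hq'len.1
    -- transfer the cut condition
    have hcutz : ∀ A : Finset G.V, u ∈ A → z ∉ A →
        ∃ e1 ∈ E0, ∃ e2 ∈ E0, e1 ≠ e2 ∧ G.Cross A e1 ∧ G.Cross A e2 := by
      intro A hu hz
      by_cases hvA : v ∈ A
      · have hecross : G.Cross A e := by
          rcases hj with ⟨h1, h2⟩ | ⟨h1, h2⟩
          · exact Or.inl ⟨h1 ▸ hvA, h2 ▸ hz⟩
          · exact Or.inr ⟨h1 ▸ hz, h2 ▸ hvA⟩
        obtain ⟨f, hf, hfcross⟩ := q'.reverse.exists_crossing A hu hz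
        have hfe : f ≠ e := by
          rintro rfl
          rw [Walk.edges_reverse, List.mem_reverse] at hf
          obtain ⟨c, d, hj2, q1, q2, hsplit⟩ := q'.split_at_edge hf
          have hlen12 : q1.edges.length + (1 + q2.edges.length) = L - 1 := by
            have := congrArg List.length hsplit
            simp at this
            omega
          rcases joins_pair hj hj2 with ⟨rfl, rfl⟩ | ⟨rfl, rfl⟩
          · -- q1 : Walk z z?? careful
            -- here c = v, d = z : q1 : Walk z v, q2 : Walk z u
            have := hmin (q2.reverse.append q1)
              (by
                intro g hg
                simp only [Walk.edges_append, Walk.edges_reverse, List.mem_append,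
                  List.mem_reverse] at hg
                rcases hg with hg | hg
                · exact hq'E g (hsplit ▸ List.mem_append_right _ (List.mem_cons_of_mem _ hg))
                · exact hq'E g (hsplit ▸ List.mem_append_left _ hg))
            simp only [Walk.edges_append, Walk.edges_reverse, List.length_append,
              List.length_reverse] at this
            omega
          · -- c = z, d = v : q1 : Walk z z, q2 : Walk v u
            have := hmin q2.reverse
              (by
                intro g hg
                rw [Walk.edges_reverse, List.mem_reverse] at hg
                exact hq'E g (hsplit ▸ List.mem_append_right _ (List.mem_cons_of_mem _ hg)))
            rw [Walk.edges_reverse, List.length_reverse] at this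
            omega
        exact ⟨e, he0, f, hwE f hf, Ne.symm hfe, hecross, hfcross⟩
      · exact hcut A hu hvA
    -- induction hypothesis
    obtain ⟨p, q, hpnd, hqnd, hdisj, hpE, hqE⟩ :=
      ih u z hcutz ⟨q'.reverse, hwE, by rw [hwlen]; omega⟩
    have hjz : G.Joins e z v := hj.symm
    by_cases hep : e ∈ p.edges
    · exact combine_edge e he0 hjz p q hpnd hqnd hdisj hpE hqE hep
    by_cases heq : e ∈ q.edges
    · exact combine_edge e he0 hjz q p hqnd hpnd
        (fun f hf hc => hdisj f hc hf) hqE hpE heq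
    -- main case: a detour avoiding e
    have hreach : G.Reach (E0.erase e) u v := by
      apply reach_of_cut
      intro A hu hv
      obtain ⟨e1, he1, e2, he2, hne, hc1, hc2⟩ := hcut A hu hv
      rcases eq_or_ne e1 e with rfl | h1
      · exact ⟨e2, Finset.mem_erase.mpr ⟨Ne.symm hne, he2⟩, hc2⟩
      · exact ⟨e1, Finset.mem_erase.mpr ⟨h1, he1⟩, hc1⟩
    obtain ⟨r0, hr0⟩ := hreach
    obtain ⟨r, hrsup, hrsub⟩ := r0.exists_nodup
    have hrE : ∀ f ∈ r.edges, f ∈ E0.erase e := fun f hf => hr0 f (hrsub f hf)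
    have hrnd : r.edges.Nodup := r.edges_nodup_of_support_nodup hrsup
    set X : Finset G.V := p.support.toFinset ∪ q.support.toFinset with hXdef
    have huX : ∃ t ∈ r.support, t ∈ X :=
      ⟨u, r.start_mem_support, by
        rw [hXdef, Finset.mem_union]
        exact Or.inl (List.mem_toFinset.mpr p.start_mem_support)⟩
    obtain ⟨w, hwX, r2, hsub2, htail⟩ := r.exists_last_in X huX
    have hr2nd : r2.edges.Nodup := hrnd.sublist hsub2
    have hr2E : ∀ f ∈ r2.edges, f ∈ E0 := fun f hf =>
      Finset.mem_of_mem_erase (hrE f (hsub2.subset hf))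
    have hr2e : e ∉ r2.edges := fun hc =>
      (Finset.mem_erase.mp (hrE e (hsub2.subset hc))).1 rfl
    have htail' : ∀ t ∈ r2.support.tail, t ∉ p.support ∧ t ∉ q.support := by
      intro t ht
      have h' := htail t ht
      rw [hXdef, Finset.mem_union, not_or, List.mem_toFinset, List.mem_toFinset] at h'
      exact h'
    have hwpq : w ∈ p.support ∨ w ∈ q.support := by
      rw [hXdef, Finset.mem_union, List.mem_toFinset, List.mem_toFinset] at hwX
      exact hwX
    rcases hwpq with hwp | hwq
    · exact combine_detour e he0 hjz p q hpnd hqnd hdisj hpE hqE hep heq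
        r2 hwp hr2nd hr2e hr2E htail'
    · exact combine_detour e he0 hjz q p hqnd hpnd
        (fun f hf hc => hdisj f hc hf) hqE hpE heq hep r2 hwq hr2nd hr2e hr2E
        (fun t ht => ⟨(htail' t ht).2, (htail' t ht).1⟩)

end Multigraph
namespace Multigraph

variable {G : Multigraph}

/-- Any pair of vertices joined by two edge-disjoint trails can be shrunk to a
chain. -/
theorem exists_isChain :
    ∀ (n : ℕ) (S0 : Finset G.V) (F0 : Finset G.E) (u v : G.V),
      S0.card + F0.card ≤ n → u ∈ S0 → v ∈ S0 →
      (∀ e ∈ F0, G.fst e ∈ S0 ∧ G.snd e ∈ S0) → G.TwoEDP F0 u v →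
      ∃ S, S ⊆ S0 ∧ ∃ F, F ⊆ F0 ∧ G.IsChain S F u v := by
  intro n
  induction n with
  | zero =>
    intro S0 F0 u v hle hu hv hcl h2
    have : S0.card = 0 := by omega
    rw [Finset.card_eq_zero] at this
    subst this
    simp at hu
  | succ n ih =>
    intro S0 F0 u v hle hu hv hcl h2
    by_cases hmin : ∀ S', S' ⊆ S0 → ∀ F', F' ⊆ F0 → u ∈ S' → v ∈ S' →
        (∀ e ∈ F', G.fst e ∈ S' ∧ G.snd e ∈ S') → G.TwoEDP F' u v →
        S' = S0 ∧ F' = F0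
    · refine ⟨S0, subset_rfl, F0, subset_rfl, ?_⟩
      exact ⟨hu, hv, hcl, h2, hmin⟩
    · push_neg at hmin
      obtain ⟨S', hS', F', hF', hu', hv', hcl', h2', hne⟩ := hmin
      have hlt : S'.card + F'.card < S0.card + F0.card := by
        have h1 : S'.card ≤ S0.card := Finset.card_le_card hS'
        have h2c : F'.card ≤ F0.card := Finset.card_le_card hF'
        rcases eq_or_ne S' S0 with rfl | hSne
        · have hFne : F' ≠ F0 := hne rfl
          have : F'.card < F0.card := Finset.card_lt_card (hF'.ssubset_of_ne hFne)
          omega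
        · have : S'.card < S0.card := Finset.card_lt_card (hS'.ssubset_of_ne hSne)
          omega
      obtain ⟨S, hS, F, hF, hch⟩ := ih S' F' u v (by omega) hu' hv' hcl' h2'
      exact ⟨S, hS.trans hS', F, hF.trans hF', hch⟩

theorem mem_cut_iff {A : Finset G.V} {e : G.E} :
    e ∈ G.cut A ↔ G.Cross A e := by
  simp [cut, Cross, Finset.mem_filter]

/-- The base case: a cycle through two distinct vertices which is a chain. -/
theorem exists_base (h3 : G.EdgeConnected 3) :
    ∃ (S : Finset G.V) (F : Finset G.E) (a b : G.V),
      G.IsChain S F a b ∧ G.IsCycleEdges F := by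
  classical
  obtain ⟨hcard, hcut3⟩ := h3
  have hV : Nonempty G.V := Fintype.card_pos_iff.mp (by omega)
  obtain ⟨a0⟩ := hV
  obtain ⟨b0, hb0⟩ := Fintype.exists_ne_of_one_lt_card (by omega) a0
  have hne : ({a0} : Finset G.V) ≠ Finset.univ := fun hc => by
    have : b0 ∈ ({a0} : Finset G.V) := hc ▸ Finset.mem_univ b0
    exact hb0 (Finset.mem_singleton.mp this)
  have h1 := hcut3 {a0} ⟨a0, Finset.mem_singleton_self a0⟩ hne
  obtain ⟨e0, he0⟩ := Finset.card_pos.mp (Nat.lt_of_lt_of_le (by norm_num) h1)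
  have hcross0 := mem_cut_iff.mp he0
  have hab : G.fst e0 ≠ G.snd e0 := by
    rcases hcross0 with ⟨hh1, hh2⟩ | ⟨hh1, hh2⟩ <;>
      [skip; skip] <;>
      · intro hc
        rw [Finset.mem_singleton] at *
        first
          | exact hh2 (hc ▸ hh1)
          | exact hh1 (hc ▸ hh2)
  set a := G.fst e0 with hadef
  set b := G.snd e0 with hbdef
  have hj0 : G.Joins e0 a b := Or.inl ⟨rfl, rfl⟩
  -- a path from a to b avoiding e0
  have hreach : G.Reach (Finset.univ.erase e0) a b := by
    apply reach_of_cut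
    intro A ha hb'
    have h2 := hcut3 A ⟨a, ha⟩ (fun hc => hb' (hc ▸ Finset.mem_univ b))
    obtain ⟨e, he, hene⟩ :=
      Finset.exists_mem_ne (s := G.cut A) (by omega) e0
    exact ⟨e, Finset.mem_erase.mpr ⟨hene, Finset.mem_univ e⟩, mem_cut_iff.mp he⟩
  obtain ⟨r0, hr0⟩ := hreach
  obtain ⟨p, hpsup, hpsub⟩ := r0.exists_nodup
  have hpe0 : ∀ f ∈ p.edges, f ≠ e0 := fun f hf =>
    (Finset.mem_erase.mp (hr0 f (hpsub f hf))).1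
  have hpnd : p.edges.Nodup := p.edges_nodup_of_support_nodup hpsup
  set F : Finset G.E := insert e0 p.edges.toFinset with hFdef
  set S : Finset G.V := p.support.toFinset with hSdef
  have he0F : e0 ∈ F := Finset.mem_insert_self _ _
  have hsubF : ∀ f ∈ p.edges, f ∈ F := fun f hf =>
    Finset.mem_insert_of_mem (List.mem_toFinset.mpr hf)
  have hlnd : (e0 :: p.edges).Nodup :=
    List.nodup_cons.mpr ⟨fun hc => hpe0 e0 hc rfl, hpnd⟩
  have hFl : F = (e0 :: p.edges).toFinset := by
    rw [hFdef, List.toFinset_cons]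
  have hainS : a ∈ S := List.mem_toFinset.mpr p.start_mem_support
  have hbinS : b ∈ S := List.mem_toFinset.mpr p.end_mem_support
  -- degrees in F
  have hdeg : ∀ vx, G.degIn F vx = 2 * (if vx ∈ p.support then 1 else 0) := by
    intro vx
    rw [hFl, degIn_toFinset hlnd, listDeg_cons, inc_eq_of_joins hj0]
    have h1 := G.listDeg_walk_nodup p hpsup vx
    by_cases hvx : vx ∈ p.support
    · rw [if_pos hvx] at h1 ⊢
      omega
    · rw [if_neg hvx] at h1 ⊢
      have hav : ¬ (a = vx) := fun hc => hvx (hc ▸ p.start_mem_support)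
      have hbv : ¬ (b = vx) := fun hc => hvx (hc ▸ p.end_mem_support)
      rw [if_neg hav, if_neg hbv] at h1 ⊢
      omega
  -- reachability within F
  have hra : ∀ x ∈ p.support, G.Reach F a x := by
    intro x hx
    obtain ⟨q, r, he, _⟩ := p.split_at hx
    exact ⟨q, fun f hf => hsubF f (by rw [he]; exact List.mem_append_left _ hf)⟩
  have hsupp_of_pos : ∀ x, 0 < G.degIn F x → x ∈ p.support := by
    intro x hx
    by_contra hc
    rw [hdeg x, if_neg hc] at hx
    simp at hx
  -- TwoEDP F a b
  have h2edp : G.TwoEDP F a b :=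
    ⟨p, .cons e0 hj0 (.nil b), hpnd, by simp, by
      intro f hf
      simp only [Walk.edges_cons, Walk.edges_nil, List.mem_cons, List.not_mem_nil,
        or_false]
      exact hpe0 f hf,
      fun f hf => hsubF f hf, by
      intro f hf
      simp only [Walk.edges_cons, Walk.edges_nil, List.mem_cons, List.not_mem_nil,
        or_false] at hf
      exact hf ▸ he0F⟩
  refine ⟨S, F, a, b, ⟨hainS, hbinS, ?_, h2edp, ?_⟩, ⟨e0, he0F⟩, fun v => by
    rw [hdeg v]; by_cases hv : v ∈ p.support <;> simp [hv], fun x y hx hy =>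
      ((hra x (hsupp_of_pos x hx)).symm.trans (hra y (hsupp_of_pos y hy)))⟩
  · -- closure
    intro e he
    rw [hFdef, Finset.mem_insert] at he
    rcases he with rfl | he
    · exact ⟨hainS, hbinS⟩
    · rw [List.mem_toFinset] at he
      have := p.edges_endpoints_mem_support he
      exact ⟨List.mem_toFinset.mpr this.1, List.mem_toFinset.mpr this.2⟩
  · -- minimality
    intro S' hS' F' hF' ha' hb' hcl' h2'
    obtain ⟨r, s, hrnd, hsnd, hrs, hrF', hsF'⟩ := h2'
    set D : Finset G.E := r.edges.toFinset ∪ s.edges.toFinset with hDdef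
    have hDF' : D ⊆ F' := by
      intro f hf
      rw [hDdef, Finset.mem_union, List.mem_toFinset, List.mem_toFinset] at hf
      exact hf.elim (hrF' f) (hsF' f)
    have hDF : D ⊆ F := hDF'.trans hF'
    have hdisjt : Disjoint r.edges.toFinset s.edges.toFinset := by
      rw [Finset.disjoint_left]
      intro f hf1 hf2
      exact hrs f (List.mem_toFinset.mp hf1) (List.mem_toFinset.mp hf2)
    have hDdeg : ∀ vx, G.degIn D vx = G.listDeg vx r.edges + G.listDeg vx s.edges := by
      intro vx
      rw [hDdef, degIn_union hdisjt, degIn_toFinset hrnd, degIn_toFinset hsnd]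
    have heven : ∀ vx, G.degIn D vx % 2 = 0 := by
      intro vx
      have p1 := G.listDeg_walk_parity r vx
      have p2 := G.listDeg_walk_parity s vx
      rw [hDdeg vx]
      omega
    have hDa : G.degIn D a = G.degIn F a := by
      obtain ⟨z, e1, hj1, q1, hq1⟩ := r.exists_cons_of_ne hab
      have he1D : e1 ∈ D := by
        rw [hDdef, Finset.mem_union, List.mem_toFinset]
        exact Or.inl (hq1 ▸ List.mem_cons_self)
      have hpos := degIn_pos he1D hj1.fst_or_snd_left
      have hmono := G.degIn_mono hDF a
      have h2a := hdeg a
      rw [if_pos p.start_mem_support] at h2a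
      have := heven a
      omega
    have hprop : ∀ (x y : G.V) (w : G.Walk x y), (∀ f ∈ w.edges, f ∈ F) →
        G.degIn D x = G.degIn F x → G.degIn D y = G.degIn F y := by
      intro x y w
      induction w with
      | nil => exact fun _ h => h
      | @cons x1 x2 x3 e hj w ih =>
        intro hwF hx
        have heF : e ∈ F := hwF e (List.mem_cons_self)
        have heD : e ∈ D := mem_of_degIn_eq hDF hx heF hj.fst_or_snd_left
        have hx2 : G.fst e = x2 ∨ G.snd e = x2 := by
          rcases hj with ⟨hh1, hh2⟩ | ⟨hh1, hh2⟩
          · exact Or.inr hh2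
          · exact Or.inl hh1
        have hpos := degIn_pos heD hx2
        have hmono := G.degIn_mono hDF x2
        have hdx2 := hdeg x2
        have hev := heven x2
        have hx2eq : G.degIn D x2 = G.degIn F x2 := by
          by_cases hm : x2 ∈ p.support
          · rw [if_pos hm] at hdx2; omega
          · rw [if_neg hm] at hdx2; omega
        exact ih (fun f hf => hwF f (List.mem_cons_of_mem _ hf)) hx2eq
    have hFD : ∀ f ∈ F, f ∈ D := by
      intro f hfF
      have hpos : 0 < G.degIn F (G.fst f) := degIn_pos hfF (Or.inl rfl)
      obtain ⟨w, hw⟩ := hra (G.fst f) (hsupp_of_pos _ hpos)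
      exact mem_of_degIn_eq hDF (hprop a (G.fst f) w hw hDa) hfF (Or.inl rfl)
    have hFeq : F' = F := subset_antisymm hF' (fun f hf => hDF' (hFD f hf))
    refine ⟨subset_antisymm hS' ?_, hFeq⟩
    intro vx hvx
    rw [hSdef, List.mem_toFinset] at hvx
    have : 0 < G.degIn F vx := by rw [hdeg vx, if_pos hvx]; omega
    obtain ⟨e, heF, hinc⟩ := G.exists_incident_of_degIn_pos this
    have := hcl' e (hFeq ▸ heF)
    rcases hinc with hinc | hinc
    · exact hinc ▸ this.1
    · exact hinc ▸ this.2

end Multigraph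
namespace Multigraph

variable {G : Multigraph}

/-- Extract an anchor from a cut edge with an end in `W`. -/
theorem anchor_extract {A W : Finset G.V} (hAW : ∀ x ∈ A, x ∉ W) {e : G.E}
    (hc : G.Cross A e) (hw : G.fst e ∈ W ∨ G.snd e ∈ W) :
    ∃ a ∈ A, ∃ x ∈ W, G.Joins e a x := by
  rcases hc with ⟨h1, h2⟩ | ⟨h1, h2⟩
  · rcases hw with hw | hw
    · exact absurd hw (hAW _ h1)
    · exact ⟨G.fst e, h1, G.snd e, hw, Or.inl ⟨rfl, rfl⟩⟩
  · rcases hw with hw | hw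
    · exact ⟨G.snd e, h2, G.fst e, hw, Or.inr ⟨rfl, rfl⟩⟩
    · exact absurd hw (hAW _ h2)

/-- The extension step: attach a new chain with two anchors to `W`. -/
theorem exists_extension (h3 : G.EdgeConnected 3) (W : Finset G.V)
    (hWne : W.Nonempty) (hWuniv : W ≠ Finset.univ) :
    ∃ (S : Finset G.V) (F : Finset G.E) (a b : G.V) (e1 e2 : G.E),
      G.IsChain S F a b ∧ (∀ x ∈ S, x ∉ W) ∧ e1 ≠ e2 ∧
      (∃ x ∈ W, G.Joins e1 a x) ∧ (∃ y ∈ W, G.Joins e2 b y) := by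
  classical
  set Out : Finset G.V := Finset.univ \ W with hOutdef
  have hOutmem : ∀ x, x ∈ Out ↔ x ∉ W := by
    intro x; simp [hOutdef]
  have hOutne : Out.Nonempty := by
    by_contra h
    rw [Finset.not_nonempty_iff_eq_empty] at h
    apply hWuniv
    apply Finset.eq_univ_iff_forall.mpr
    intro x
    by_contra hx
    have : x ∈ Out := (hOutmem x).mpr hx
    rw [h] at this
    simp at this
  -- outer edges
  set Outer : G.E → Prop := fun e => G.fst e ∉ W ∧ G.snd e ∉ W with hOuterdef
  set XA : Finset G.V → Finset G.E :=
    fun A => Finset.univ.filter (fun e => Outer e ∧ G.Cross A e) with hXAdef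
  -- the family of candidate sets
  set good : Finset G.V → Prop :=
    fun A => A ⊆ Out ∧ A.Nonempty ∧ (XA A).card ≤ 1 with hgooddef
  have hgoodOut : good Out := by
    refine ⟨subset_rfl, hOutne, ?_⟩
    have : XA Out = ∅ := by
      rw [Finset.eq_empty_iff_forall_notMem]
      intro e he
      rw [hXAdef, Finset.mem_filter] at he
      obtain ⟨-, ⟨ho1, ho2⟩, hcr⟩ := he
      rcases hcr with ⟨hc1, hc2⟩ | ⟨hc1, hc2⟩
      · exact hc2 ((hOutmem _).mpr ho2)
      · exact hc1 ((hOutmem _).mpr ho1)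
    rw [this]
    simp
  -- a minimal good set
  obtain ⟨A, hAmem, hAmin⟩ := Finset.exists_min_image
    (Finset.univ.filter (fun A => good A)) Finset.card
    ⟨Out, Finset.mem_filter.mpr ⟨Finset.mem_univ _, hgoodOut⟩⟩
  rw [Finset.mem_filter] at hAmem
  obtain ⟨-, hAOut, hAne, hXAcard⟩ := hAmem
  have hAmin' : ∀ B, good B → A.card ≤ B.card := fun B hB =>
    hAmin B (Finset.mem_filter.mpr ⟨Finset.mem_univ _, hB⟩)
  have hAnW : ∀ x ∈ A, x ∉ W := fun x hx => (hOutmem x).mp (hAOut hx)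
  -- the internal edge set of A
  set EA : Finset G.E :=
    Finset.univ.filter (fun e => G.fst e ∈ A ∧ G.snd e ∈ A) with hEAdef
  -- claim 1 : internal cuts of A are large
  have claim1 : ∀ D ⊆ A, D.Nonempty → D ≠ A →
      2 ≤ (Finset.univ.filter (fun e => (G.fst e ∈ A ∧ G.snd e ∈ A) ∧
        G.Cross D e)).card := by
    intro D hDA hDne hDneA
    by_contra hlt
    push_neg at hlt
    set ED : Finset G.E := Finset.univ.filter
      (fun e => (G.fst e ∈ A ∧ G.snd e ∈ A) ∧ G.Cross D e) with hEDdef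
    have hED1 : ED.card ≤ 1 := by omega
    set XAD : Finset G.E := (XA A).filter
      (fun e => G.fst e ∈ D ∨ G.snd e ∈ D) with hXADdef
    by_cases hXADe : XAD = ∅
    · -- D itself is good: contradiction with minimality
      have hgoodD : good D := by
        refine ⟨hDA.trans hAOut, hDne, ?_⟩
        have hsub : XA D ⊆ ED := by
          intro e he
          rw [hXAdef, Finset.mem_filter] at he
          obtain ⟨-, hout, hcr⟩ := he
          rw [hEDdef, Finset.mem_filter]
          refine ⟨Finset.mem_univ _, ?_, ?_⟩
          · -- both ends in A
            rcases hcr with ⟨hc1, hc2⟩ | ⟨hc1, hc2⟩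
            · refine ⟨hDA hc1, ?_⟩
              by_contra hsA
              have : e ∈ XAD := by
                rw [hXADdef, Finset.mem_filter, hXAdef, Finset.mem_filter]
                exact ⟨⟨Finset.mem_univ _, hout, Or.inl ⟨hDA hc1, hsA⟩⟩, Or.inl hc1⟩
              rw [hXADe] at this
              simp at this
            · refine ⟨?_, hDA hc2⟩
              by_contra hsA
              have : e ∈ XAD := by
                rw [hXADdef, Finset.mem_filter, hXAdef, Finset.mem_filter]
                exact ⟨⟨Finset.mem_univ _, hout, Or.inr ⟨hsA, hDA hc2⟩⟩, Or.inr hc2⟩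
              rw [hXADe] at this
              simp at this
          · exact hcr
        have := Finset.card_le_card hsub
        omega
      have hlt2 : D.card < A.card :=
        Finset.card_lt_card (hDA.ssubset_of_ne hDneA)
      have := hAmin' D hgoodD
      omega
    · -- A \ D is good: contradiction with minimality
      have hXADne : XAD.Nonempty := Finset.nonempty_iff_ne_empty.mpr hXADe
      have hXADsub : XAD ⊆ XA A := Finset.filter_subset _ _
      have hXADcard : 1 ≤ XAD.card := Finset.card_pos.mpr hXADne
      set D2 : Finset G.V := A \ D with hD2def
      have hD2mem : ∀ x, x ∈ D2 ↔ x ∈ A ∧ x ∉ D := by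
        intro x; simp [hD2def]
      have hD2ne : D2.Nonempty := by
        obtain ⟨x, hxA, hxD⟩ := Finset.exists_of_ssubset (hDA.ssubset_of_ne hDneA)
        exact ⟨x, (hD2mem x).mpr ⟨hxA, hxD⟩⟩
      have hgoodD2 : good D2 := by
        refine ⟨(Finset.sdiff_subset).trans hAOut, hD2ne, ?_⟩
        have hsub : XA D2 ⊆ ED ∪ ((XA A) \ XAD) := by
          intro e he
          rw [hXAdef, Finset.mem_filter] at he
          obtain ⟨-, hout, hcr⟩ := he
          rw [Finset.mem_union]
          rcases hcr with ⟨hc1, hc2⟩ | ⟨hc1, hc2⟩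
          · -- fst ∈ D2, snd ∉ D2
            have hfA : G.fst e ∈ A := ((hD2mem _).mp hc1).1
            have hfD : G.fst e ∉ D := ((hD2mem _).mp hc1).2
            by_cases hsA : G.snd e ∈ A
            · -- snd ∈ D
              have hsD : G.snd e ∈ D := by
                by_contra hsD
                exact hc2 ((hD2mem _).mpr ⟨hsA, hsD⟩)
              exact Or.inl (by
                rw [hEDdef, Finset.mem_filter]
                exact ⟨Finset.mem_univ _, ⟨hfA, hsA⟩, Or.inr ⟨hfD, hsD⟩⟩)
            · refine Or.inr ?_
              rw [Finset.mem_sdiff]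
              constructor
              · rw [hXAdef, Finset.mem_filter]
                exact ⟨Finset.mem_univ _, hout, Or.inl ⟨hfA, hsA⟩⟩
              · rw [hXADdef, Finset.mem_filter]
                rintro ⟨-, hor | hor⟩
                · exact hfD hor
                · exact hsA (hDA hor)
          · -- snd ∈ D2, fst ∉ D2
            have hsA2 : G.snd e ∈ A := ((hD2mem _).mp hc2).1
            have hsD2 : G.snd e ∉ D := ((hD2mem _).mp hc2).2
            by_cases hfA : G.fst e ∈ A
            · have hfD : G.fst e ∈ D := by
                by_contra hfD
                exact hc1 ((hD2mem _).mpr ⟨hfA, hfD⟩)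
              exact Or.inl (by
                rw [hEDdef, Finset.mem_filter]
                exact ⟨Finset.mem_univ _, ⟨hfA, hsA2⟩, Or.inl ⟨hfD, hsD2⟩⟩)
            · refine Or.inr ?_
              rw [Finset.mem_sdiff]
              constructor
              · rw [hXAdef, Finset.mem_filter]
                exact ⟨Finset.mem_univ _, hout, Or.inr ⟨hfA, hsA2⟩⟩
              · rw [hXADdef, Finset.mem_filter]
                rintro ⟨-, hor | hor⟩
                · exact hfA (hDA hor)
                · exact hsD2 hor
        have h1 := Finset.card_le_card hsub
        have h2 := Finset.card_union_le ED ((XA A) \ XAD)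
        have h3 : ((XA A) \ XAD).card = (XA A).card - XAD.card :=
          Finset.card_sdiff_of_subset hXADsub
        omega
      have hD2lt : D2.card < A.card := by
        have h1 : D2.card = A.card - D.card := Finset.card_sdiff_of_subset hDA
        have h2 : 1 ≤ D.card := Finset.card_pos.mpr hDne
        have h3 : D.card ≤ A.card := Finset.card_le_card hDA
        have h4 : 1 ≤ A.card := Finset.card_pos.mpr hAne
        omega
      have := hAmin' D2 hgoodD2
      omega
  -- claim 2 : two anchors
  have hAuniv : A ≠ Finset.univ := by
    intro hc
    obtain ⟨w, hw⟩ := hWne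
    have : w ∈ A := hc ▸ Finset.mem_univ w
    exact hAnW w this hw
  have hcutA := h3.2 A hAne hAuniv
  set WA : Finset G.E := (G.cut A).filter
    (fun e => G.fst e ∈ W ∨ G.snd e ∈ W) with hWAdef
  have hcutsub : G.cut A ⊆ WA ∪ XA A := by
    intro e he
    have hcr := mem_cut_iff.mp he
    rw [Finset.mem_union]
    by_cases hw : G.fst e ∈ W ∨ G.snd e ∈ W
    · exact Or.inl (by rw [hWAdef, Finset.mem_filter]; exact ⟨he, hw⟩)
    · push_neg at hw
      exact Or.inr (by
        rw [hXAdef, Finset.mem_filter]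
        exact ⟨Finset.mem_univ _, ⟨hw.1, hw.2⟩, hcr⟩)
  have hWA2 : 2 ≤ WA.card := by
    have h1 := Finset.card_le_card hcutsub
    have h2 := Finset.card_union_le WA (XA A)
    omega
  obtain ⟨e1, he1, e2, he2, hne12⟩ := Finset.one_lt_card.mp (by omega : 1 < WA.card)
  rw [hWAdef, Finset.mem_filter] at he1 he2
  obtain ⟨a, haA, x, hxW, hj1⟩ := anchor_extract hAnW (mem_cut_iff.mp he1.1) he1.2
  obtain ⟨b, hbA, y, hyW, hj2⟩ := anchor_extract hAnW (mem_cut_iff.mp he2.1) he2.2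
  -- two edge-disjoint trails from a to b within EA
  have hEAA : ∀ e ∈ EA, G.fst e ∈ A ∧ G.snd e ∈ A := by
    intro e he
    rw [hEAdef, Finset.mem_filter] at he
    exact he.2
  have h2edp : G.TwoEDP EA a b := by
    rcases eq_or_ne a b with rfl | hab
    · exact twoEDP_self EA a
    · have hcut2 : ∀ Dset : Finset G.V, a ∈ Dset → b ∉ Dset →
          ∃ f1 ∈ EA, ∃ f2 ∈ EA, f1 ≠ f2 ∧ G.Cross Dset f1 ∧ G.Cross Dset f2 := by
        intro Dset haD hbD
        have hc1 := claim1 (Dset ∩ A) (Finset.inter_subset_right)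
          ⟨a, Finset.mem_inter.mpr ⟨haD, haA⟩⟩
          (fun hc => hbD (Finset.mem_inter.mp (by rw [hc]; exact hbA)).1)
        have hconv : ∀ e, ((G.fst e ∈ A ∧ G.snd e ∈ A) ∧ G.Cross (Dset ∩ A) e) →
            e ∈ EA ∧ G.Cross Dset e := by
          rintro e ⟨⟨hf, hs⟩, hcr⟩
          refine ⟨by rw [hEAdef, Finset.mem_filter]; exact ⟨Finset.mem_univ _, hf, hs⟩, ?_⟩
          rcases hcr with ⟨hc1', hc2'⟩ | ⟨hc1', hc2'⟩
          · exact Or.inl ⟨(Finset.mem_inter.mp hc1').1,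
              fun hc => hc2' (Finset.mem_inter.mpr ⟨hc, hs⟩)⟩
          · exact Or.inr ⟨fun hc => hc1' (Finset.mem_inter.mpr ⟨hc, hf⟩),
              (Finset.mem_inter.mp hc2').1⟩
        obtain ⟨f1, hf1, f2, hf2, hnef⟩ := Finset.one_lt_card.mp
          (by omega : 1 < (Finset.univ.filter (fun e => (G.fst e ∈ A ∧ G.snd e ∈ A) ∧
            G.Cross (Dset ∩ A) e)).card)
        rw [Finset.mem_filter] at hf1 hf2
        obtain ⟨hf1EA, hf1cr⟩ := hconv f1 hf1.2
        obtain ⟨hf2EA, hf2cr⟩ := hconv f2 hf2.2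
        exact ⟨f1, hf1EA, f2, hf2EA, hnef, hf1cr, hf2cr⟩
      have hr : G.Reach EA a b := by
        apply reach_of_cut
        intro Dset haD hbD
        obtain ⟨f1, hf1, -, -, -, hcr1, -⟩ := hcut2 Dset haD hbD
        exact ⟨f1, hf1, hcr1⟩
      obtain ⟨pw, hpw⟩ := hr
      exact menger2_aux EA pw.edges.length a b hcut2 ⟨pw, hpw, le_refl _⟩
  obtain ⟨S, hSA, F, hFEA, hchain⟩ :=
    exists_isChain (A.card + EA.card) A EA a b (le_refl _) haA hbA hEAA h2edp
  exact ⟨S, F, a, b, e1, e2, hchain, fun z hz => hAnW z (hSA hz), hne12,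
    ⟨x, hxW, hj1⟩, ⟨y, hyW, hj2⟩⟩

end Multigraph
namespace Multigraph

/-- A partial anchored chain cover, covering exactly the vertex set `W`. -/
structure PACC (G : Multigraph) (W : Finset G.V) where
  k : ℕ
  kpos : 0 < k
  S : Fin k → Finset G.V
  F : Fin k → Finset G.E
  endA : Fin k → G.V
  endB : Fin k → G.V
  anchor1 : Fin k → G.E
  anchor2 : Fin k → G.E
  chain : ∀ i : Fin k, G.IsChain (S i) (F i) (endA i) (endB i)
  first_cycle : G.IsCycleEdges (F ⟨0, kpos⟩)
  disj : ∀ i j : Fin k, i ≠ j → Disjoint (S i) (S j)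
  hW : ∀ x : G.V, x ∈ W ↔ ∃ i : Fin k, x ∈ S i
  anchor_ne : ∀ i : Fin k, i ≠ ⟨0, kpos⟩ → anchor1 i ≠ anchor2 i
  anchor1_spec : ∀ i : Fin k, i ≠ ⟨0, kpos⟩ →
    ∃ x : G.V, G.Joins (anchor1 i) (endA i) x ∧ ∃ j : Fin k, j < i ∧ x ∈ S j
  anchor2_spec : ∀ i : Fin k, i ≠ ⟨0, kpos⟩ →
    ∃ y : G.V, G.Joins (anchor2 i) (endB i) y ∧ ∃ j : Fin k, j < i ∧ y ∈ S j

variable {G : Multigraph}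

/-- The base partial cover, from a cycle chain. -/
theorem pacc_base (h3 : G.EdgeConnected 3) :
    ∃ W : Finset G.V, Nonempty (G.PACC W) := by
  obtain ⟨S, F, a, b, hchain, hcyc⟩ := exists_base h3
  obtain ⟨e0, -⟩ := hcyc.1
  refine ⟨S, ⟨{
    k := 1
    kpos := Nat.one_pos
    S := fun _ => S
    F := fun _ => F
    endA := fun _ => a
    endB := fun _ => b
    anchor1 := fun _ => e0
    anchor2 := fun _ => e0
    chain := fun _ => hchain
    first_cycle := hcyc
    disj := fun i j hij => absurd (Subsingleton.elim i j) hij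
    hW := fun x => ⟨fun hx => ⟨⟨0, Nat.one_pos⟩, hx⟩, fun ⟨_, hx⟩ => hx⟩
    anchor_ne := fun i hi => absurd (Subsingleton.elim i ⟨0, Nat.one_pos⟩) hi
    anchor1_spec := fun i hi => absurd (Subsingleton.elim i ⟨0, Nat.one_pos⟩) hi
    anchor2_spec := fun i hi => absurd (Subsingleton.elim i ⟨0, Nat.one_pos⟩) hi }⟩⟩

/-- Extension of a partial cover. -/
theorem pacc_extend (h3 : G.EdgeConnected 3) {W : Finset G.V} (c : G.PACC W)
    (hne : W ≠ Finset.univ) :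
    ∃ W' : Finset G.V, W ⊆ W' ∧ W.card < W'.card ∧ Nonempty (G.PACC W') := by
  classical
  have hWne : W.Nonempty := by
    refine ⟨c.endA ⟨0, c.kpos⟩, ?_⟩
    rw [c.hW]
    exact ⟨⟨0, c.kpos⟩, (c.chain ⟨0, c.kpos⟩).1⟩
  obtain ⟨S', F', a, b, e1, e2, hchain, hSout, hne12, hanch1, hanch2⟩ :=
    exists_extension h3 W hWne hne
  set n := c.k with hn
  have hz : (⟨0, Nat.succ_pos n⟩ : Fin (n + 1)) = Fin.castSucc ⟨0, c.kpos⟩ := by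
    apply Fin.ext
    simp
  have hlastne : (Fin.last n) ≠ (⟨0, Nat.succ_pos n⟩ : Fin (n + 1)) := by
    intro hc
    have hk : 0 < n := c.kpos
    have := congrArg Fin.val hc
    simp [Fin.last] at this
    omega
  have hSsubW : ∀ (j : Fin n) (x : G.V), x ∈ c.S j → x ∈ W := fun j x hx =>
    (c.hW x).mpr ⟨j, hx⟩
  refine ⟨W ∪ S', Finset.subset_union_left, ?_, ⟨{
    k := n + 1
    kpos := Nat.succ_pos n
    S := Fin.snoc c.S S'
    F := Fin.snoc c.F F'
    endA := Fin.snoc c.endA a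
    endB := Fin.snoc c.endB b
    anchor1 := Fin.snoc c.anchor1 e1
    anchor2 := Fin.snoc c.anchor2 e2
    chain := ?_
    first_cycle := ?_
    disj := ?_
    hW := ?_
    anchor_ne := ?_
    anchor1_spec := ?_
    anchor2_spec := ?_ }⟩⟩
  · -- cardinality increases
    have haS : a ∈ S' := hchain.1
    have haW : a ∉ W := hSout a haS
    apply Finset.card_lt_card
    rw [Finset.ssubset_iff_of_subset Finset.subset_union_left]
    exact ⟨a, Finset.mem_union_right _ haS, haW⟩
  · -- chains
    intro i
    refine Fin.lastCases ?_ ?_ i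
    · simp only [Fin.snoc_last]
      exact hchain
    · intro j
      simp only [Fin.snoc_castSucc]
      exact c.chain j
  · -- first cycle
    rw [hz]
    simp only [Fin.snoc_castSucc]
    exact c.first_cycle
  · -- disjointness
    intro i j hij
    rcases Fin.eq_castSucc_or_eq_last i with ⟨i', rfl⟩ | rfl <;>
      rcases Fin.eq_castSucc_or_eq_last j with ⟨j', rfl⟩ | rfl <;>
      simp only [Fin.snoc_last, Fin.snoc_castSucc]
    · exact c.disj i' j' (fun hc => hij (by rw [hc]))
    · rw [Finset.disjoint_right]
      exact fun {x} hx hx' => hSout x hx (hSsubW i' x hx')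
    · rw [Finset.disjoint_left]
      exact fun {x} hx hx' => hSout x hx (hSsubW j' x hx')
    · exact absurd rfl hij
  · -- covered set
    intro x
    constructor
    · intro hx
      rcases Finset.mem_union.mp hx with hx | hx
      · obtain ⟨j, hj⟩ := (c.hW x).mp hx
        exact ⟨Fin.castSucc j, by simp only [Fin.snoc_castSucc]; exact hj⟩
      · exact ⟨Fin.last n, by simp only [Fin.snoc_last]; exact hx⟩
    · rintro ⟨i, hi⟩
      refine Fin.lastCases ?_ ?_ i hi <;> [skip; intro j hj]
      · intro hi'
        rw [Fin.snoc_last] at hi'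
        exact Finset.mem_union_right _ hi'
      · rw [Fin.snoc_castSucc] at hj
        exact Finset.mem_union_left _ (hSsubW j x hj)
  · -- anchor_ne
    intro i hi
    refine Fin.lastCases ?_ ?_ i hi <;> [skip; intro j hj] <;> [intro _ ; skip]
    · simp only [Fin.snoc_last]
      exact hne12
    · simp only [Fin.snoc_castSucc]
      refine c.anchor_ne j (fun hc => hj ?_)
      rw [hc, ← hz]
  · -- anchor1_spec
    intro i hi
    refine Fin.lastCases ?_ ?_ i hi <;> [skip; intro j hj] <;> [intro _ ; skip]
    · simp only [Fin.snoc_last]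
      obtain ⟨x, hxW, hj1⟩ := hanch1
      obtain ⟨j, hjS⟩ := (c.hW x).mp hxW
      exact ⟨x, hj1, Fin.castSucc j, Fin.castSucc_lt_last j,
        by simp only [Fin.snoc_castSucc]; exact hjS⟩
    · simp only [Fin.snoc_castSucc]
      obtain ⟨x, hx, j', hj', hj'S⟩ := c.anchor1_spec j (fun hc => hj (by rw [hc, ← hz]))
      exact ⟨x, hx, Fin.castSucc j', by
        constructor
        · exact Fin.castSucc_lt_castSucc_iff.mpr hj'
        · simp only [Fin.snoc_castSucc]; exact hj'S⟩
  · -- anchor2_spec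
    intro i hi
    refine Fin.lastCases ?_ ?_ i hi <;> [skip; intro j hj] <;> [intro _ ; skip]
    · simp only [Fin.snoc_last]
      obtain ⟨y, hyW, hj2⟩ := hanch2
      obtain ⟨j, hjS⟩ := (c.hW y).mp hyW
      exact ⟨y, hj2, Fin.castSucc j, Fin.castSucc_lt_last j,
        by simp only [Fin.snoc_castSucc]; exact hjS⟩
    · simp only [Fin.snoc_castSucc]
      obtain ⟨y, hy, j', hj', hj'S⟩ := c.anchor2_spec j (fun hc => hj (by rw [hc, ← hz]))
      exact ⟨y, hy, Fin.castSucc j', by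
        constructor
        · exact Fin.castSucc_lt_castSucc_iff.mpr hj'
        · simp only [Fin.snoc_castSucc]; exact hj'S⟩

theorem pacc_univ (h3 : G.EdgeConnected 3) :
    ∀ (m : ℕ) (W : Finset G.V), Fintype.card G.V - W.card ≤ m → G.PACC W →
      Nonempty (G.PACC Finset.univ) := by
  intro m
  induction m with
  | zero =>
    intro W hle c
    have h1 : W.card ≤ Fintype.card G.V := Finset.card_le_univ W
    have : W = Finset.univ := Finset.eq_univ_of_card W (by omega)
    exact ⟨this ▸ c⟩
  | succ m ih =>
    intro W hle c
    by_cases hW : W = Finset.univ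
    · exact ⟨hW ▸ c⟩
    · obtain ⟨W', hsub, hlt, ⟨c'⟩⟩ := pacc_extend h3 c hW
      have h1 : W'.card ≤ Fintype.card G.V := Finset.card_le_univ W'
      exact ih W' (by omega) c'

end Multigraph

/-- Every 3-edge-connected graph contains an anchored chain
cover. -/
theorem stmt1 (G : Multigraph) (h : G.EdgeConnected 3) :
    Nonempty G.AnchoredChainCover := by
  obtain ⟨W, ⟨c⟩⟩ := Multigraph.pacc_base h
  obtain ⟨c'⟩ := Multigraph.pacc_univ h (Fintype.card G.V) W (by omega) c
  exact ⟨{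
    k := c'.k
    kpos := c'.kpos
    S := c'.S
    F := c'.F
    endA := c'.endA
    endB := c'.endB
    anchor1 := c'.anchor1
    anchor2 := c'.anchor2
    chain := c'.chain
    first_cycle := c'.first_cycle
    disj := c'.disj
    cover := fun x => (c'.hW x).mp (Finset.mem_univ x)
    anchor_ne := c'.anchor_ne
    anchor1_spec := c'.anchor1_spec
    anchor2_spec := c'.anchor2_spec }⟩
end

section
/- If G is a 4-edge-connected graph with n vertices, then G has at least 2^{n/250} nowhere-zero Z2×Z2-flows. -/
namespace Multigraph

variable (G : Multigraph)

/-- Kirchhoff's law at every vertex, with respect to the reference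
orientation: the sum of the values on edges directed away from `v` equals the
sum on edges directed towards `v`. -/
def IsFlow {Γ : Type} [AddCommGroup Γ] (φ : G.E → Γ) : Prop :=
  ∀ v : G.V,
    ∑ e ∈ Finset.univ.filter (fun e => G.fst e = v), φ e =
      ∑ e ∈ Finset.univ.filter (fun e => G.snd e = v), φ e

/-- A flow is nowhere-zero if its value is nonzero on every edge. -/
def NowhereZero {Γ : Type} [Zero Γ] (φ : G.E → Γ) : Prop :=
  ∀ e : G.E, φ e ≠ 0

end Multigraph


namespace Multigraph

variable (G : Multigraph)

open Finset
open scoped symmDiff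

/-- Boundary vector of an edge over GF(2). -/
def bvec (e : G.E) : G.V → ZMod 2 := fun v =>
  (if G.fst e = v then 1 else 0) + (if G.snd e = v then 1 else 0)

variable {G}

lemma zmod2_neg (x : ZMod 2) : -x = x := CharTwo.neg_eq x

lemma w2_add_self (w : G.V → ZMod 2) : w + w = 0 := by
  funext v
  exact CharTwo.add_self_eq_zero (w v)

lemma w2_cancel {a b : G.V → ZMod 2} (h : a + b = 0) : b = a := by
  have h1 : b = -a := eq_neg_of_add_eq_zero_right h
  rw [h1]; funext v; exact zmod2_neg _

/-- subset-sum span of the boundary vectors of a finset of edges -/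
def SSpan (F : Finset G.E) : Set (G.V → ZMod 2) :=
  {w | ∃ J ⊆ F, w = ∑ e ∈ J, G.bvec e}

/-- independence of the boundary vectors of a finset of edges -/
def Indep (F : Finset G.E) : Prop :=
  ∀ J ⊆ F, ∑ e ∈ J, G.bvec e = 0 → J = ∅

lemma sspan_zero (F : Finset G.E) : (0 : G.V → ZMod 2) ∈ SSpan F :=
  ⟨∅, empty_subset _, by simp⟩

lemma sspan_mono {F F' : Finset G.E} (h : F ⊆ F') : SSpan F ⊆ SSpan F' :=
  fun _ ⟨J, hJ, hw⟩ => ⟨J, hJ.trans h, hw⟩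

lemma mem_sspan_of_mem {F : Finset G.E} {e : G.E} (he : e ∈ F) : G.bvec e ∈ SSpan F :=
  ⟨{e}, singleton_subset_iff.mpr he, by simp⟩

lemma sum_symmDiff_char2 {α : Type*} [DecidableEq α] (s t : Finset α)
    (f : α → G.V → ZMod 2) :
    ∑ x ∈ s ∆ t, f x = ∑ x ∈ s, f x + ∑ x ∈ t, f x := by
  have h1 : ∑ x ∈ s ∪ t, f x + ∑ x ∈ s ∩ t, f x = ∑ x ∈ s, f x + ∑ x ∈ t, f x :=
    Finset.sum_union_inter
  have h2 : s ∪ t = (s ∆ t) ∪ (s ∩ t) := by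
    ext x; simp [Finset.mem_symmDiff]; tauto
  have h3 : Disjoint (s ∆ t) (s ∩ t) := by
    rw [Finset.disjoint_left]; intro x hx hx'
    simp [Finset.mem_symmDiff] at hx; simp at hx'; tauto
  rw [h2, Finset.sum_union h3] at h1
  rw [add_assoc, w2_add_self] at h1
  simpa using h1

lemma symmDiff_subset_union' {J J' F : Finset G.E} (hJ : J ⊆ F) (hJ' : J' ⊆ F) :
    J ∆ J' ⊆ F := by
  intro x hx
  rcases Finset.mem_symmDiff.mp hx with ⟨h1, _⟩ | ⟨h1, _⟩
  exacts [hJ h1, hJ' h1]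

lemma sspan_add {F : Finset G.E} {w w' : G.V → ZMod 2}
    (h : w ∈ SSpan F) (h' : w' ∈ SSpan F) : w + w' ∈ SSpan F := by
  obtain ⟨J, hJ, rfl⟩ := h
  obtain ⟨J', hJ', rfl⟩ := h'
  exact ⟨J ∆ J', symmDiff_subset_union' hJ hJ', (sum_symmDiff_char2 J J' _).symm⟩

/-- If every generator of `F'` lies in `SSpan F''` then `SSpan F' ⊆ SSpan F''`. -/
lemma sspan_le {F' F'' : Finset G.E} (h : ∀ e ∈ F', G.bvec e ∈ SSpan F'') :
    SSpan F' ⊆ SSpan F'' := by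
  rintro w ⟨J, hJ, rfl⟩
  induction J using Finset.induction with
  | empty => simpa using sspan_zero F''
  | @insert e J he ih =>
    rw [Finset.sum_insert he]
    exact sspan_add (h _ (hJ (Finset.mem_insert_self _ _)))
      (ih (fun x hx => hJ (Finset.mem_insert_of_mem hx)))

lemma indep_empty : Indep (∅ : Finset G.E) := by
  intro J hJ _; exact Finset.subset_empty.mp hJ

lemma Indep.mono {F F' : Finset G.E} (h : Indep F') (hsub : F ⊆ F') : Indep F :=
  fun J hJ => h J (hJ.trans hsub)

/-- uniqueness of subset-sum representations under independence -/
lemma Indep.unique_rep {F : Finset G.E} (h : Indep F) {J J' : Finset G.E}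
    (hJ : J ⊆ F) (hJ' : J' ⊆ F) (heq : ∑ e ∈ J, G.bvec e = ∑ e ∈ J', G.bvec e) :
    J = J' := by
  have hz : ∑ e ∈ J ∆ J', G.bvec e = 0 := by
    rw [sum_symmDiff_char2, heq, w2_add_self]
  have h0 := h (J ∆ J') (symmDiff_subset_union' hJ hJ') hz
  exact Finset.symmDiff_eq_empty.mp h0

lemma indep_insert {F : Finset G.E} {e : G.E} (h : Indep F)
    (he : G.bvec e ∉ SSpan F) : Indep (insert e F) := by
  intro J hJ hsum
  by_cases heJ : e ∈ J
  · exfalso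
    apply he
    refine ⟨J.erase e, ?_, ?_⟩
    · intro x hx
      have hxJ := Finset.mem_of_mem_erase hx
      have hxe := Finset.ne_of_mem_erase hx
      rcases Finset.mem_insert.mp (hJ hxJ) with h1 | h1
      · exact absurd h1 hxe
      · exact h1
    · have h5 : G.bvec e + ∑ x ∈ J.erase e, G.bvec x = 0 := by
        rw [Finset.add_sum_erase _ _ heJ]; exact hsum
      exact (w2_cancel h5).symm
  · apply h J _ hsum
    intro x hx
    rcases Finset.mem_insert.mp (hJ hx) with h1 | h1
    · exact absurd (h1 ▸ hx) heJ
    · exact h1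

end Multigraph

namespace Multigraph

variable {G : Multigraph}

open Finset
open scoped symmDiff

lemma sum_subset_mem_sspan {J F : Finset G.E} (h : J ⊆ F) :
    (∑ e ∈ J, G.bvec e) ∈ SSpan F := ⟨J, h, rfl⟩

/-- if `e`'s representation over the independent set `I` must use `f`,
i.e. `bvec e ∉ SSpan (I.erase f)`, then for any representation `J` of `e`
we have `f ∈ J`. -/
lemma mem_rep_of_not_sspan_erase {I J : Finset G.E} {e f : G.E}
    (hJ : J ⊆ I) (hrep : G.bvec e = ∑ x ∈ J, G.bvec x)
    (hf : G.bvec e ∉ SSpan (I.erase f)) : f ∈ J := by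
  by_contra hfJ
  exact hf ⟨J, fun x hx => Finset.mem_erase.mpr ⟨fun h => hfJ (h ▸ hx), hJ hx⟩, hrep⟩

/-- Conversely: under independence, if some representation avoids `f`,
then membership in `SSpan (I.erase f)` holds; in contrapositive form:
if `f` belongs to the (unique) representation `J`, then
`bvec e ∉ SSpan (I.erase f)`. -/
lemma not_sspan_erase_of_mem_rep {I J : Finset G.E} {e f : G.E} (hI : Indep I)
    (hJ : J ⊆ I) (hrep : G.bvec e = ∑ x ∈ J, G.bvec x) (hfJ : f ∈ J) :
    G.bvec e ∉ SSpan (I.erase f) := by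
  rintro ⟨J', hJ', hrep'⟩
  have hJ'I : J' ⊆ I := hJ'.trans (Finset.erase_subset _ _)
  have := hI.unique_rep hJ hJ'I (hrep ▸ hrep')
  subst this
  exact (Finset.mem_erase.mp (hJ' hfJ)).1 rfl

/-- The key single-exchange lemma: swapping `e1 ∈ I` out for `e0 ∉ I`
(where `e0`'s fundamental circuit uses `e1`) preserves independence,
the span, and the cardinality. -/
lemma exchange {I : Finset G.E} {e0 e1 : G.E} (hI : Indep I)
    (he0 : e0 ∉ I) (hsp : G.bvec e0 ∈ SSpan I) (he1 : e1 ∈ I)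
    (hns : G.bvec e0 ∉ SSpan (I.erase e1)) :
    Indep (insert e0 (I.erase e1)) ∧
    SSpan (insert e0 (I.erase e1)) = SSpan I ∧
    (insert e0 (I.erase e1)).card = I.card := by
  obtain ⟨J, hJ, hrep⟩ := hsp
  have he1J : e1 ∈ J := mem_rep_of_not_sspan_erase hJ hrep hns
  have he0ne : e0 ∉ I.erase e1 := fun h => he0 (Finset.mem_of_mem_erase h)
  refine ⟨indep_insert (hI.mono (Finset.erase_subset _ _)) hns, ?_, ?_⟩
  · apply le_antisymm
    · apply sspan_le
      intro x hx
      rcases Finset.mem_insert.mp hx with rfl | hx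
      · exact ⟨J, hJ, hrep⟩
      · exact mem_sspan_of_mem (Finset.mem_of_mem_erase hx)
    · apply sspan_le
      intro f hf
      by_cases hfe1 : f = e1
      · subst hfe1
        -- bvec e1 = bvec e0 + ∑_{J.erase e1}
        have hsum : G.bvec f + ∑ x ∈ J.erase f, G.bvec x = ∑ x ∈ J, G.bvec x :=
          Finset.add_sum_erase _ _ he1J
        have : G.bvec f = G.bvec e0 + ∑ x ∈ J.erase f, G.bvec x := by
          rw [hrep]
          have := congrArg (fun w => w + ∑ x ∈ J.erase f, G.bvec x) hsum.symm
          rw [add_assoc, w2_add_self, add_zero] at this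
          exact this.symm
        rw [this]
        apply sspan_add
        · exact mem_sspan_of_mem (Finset.mem_insert_self _ _)
        · apply sum_subset_mem_sspan
          intro x hx
          apply Finset.mem_insert_of_mem
          exact Finset.mem_erase.mpr ⟨(Finset.mem_erase.mp hx).1, hJ (Finset.mem_erase.mp hx).2⟩
      · exact mem_sspan_of_mem (Finset.mem_insert_of_mem (Finset.mem_erase.mpr ⟨hfe1, hf⟩))
  · rw [Finset.card_insert_of_notMem he0ne, Finset.card_erase_of_mem he1,
      Nat.sub_add_cancel (Finset.card_pos.mpr ⟨e1, he1⟩)]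

end Multigraph

namespace Multigraph

variable {G : Multigraph}

open Finset
open scoped symmDiff

/-- a pair of edge-disjoint independent edge sets, indexed by `Bool` -/
def GoodPair (I : Bool → Finset G.E) : Prop :=
  (∀ e, e ∈ I true → e ∈ I false → False) ∧ ∀ b, Indep (I b)

def total (I : Bool → Finset G.E) : ℕ := (I true).card + (I false).card

def Unused (I : Bool → Finset G.E) (e : G.E) : Prop := ∀ b, e ∉ I b

/-- exchange digraph arc -/
def arc (I : Bool → Finset G.E) (e f : G.E) : Prop :=
  ∃ b, e ∉ I b ∧ G.bvec e ∈ SSpan (I b) ∧ f ∈ I b ∧ G.bvec e ∉ SSpan ((I b).erase f)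

/-- an element that can be added to one of the sides it does not belong to -/
def Terminal (I : Bool → Finset G.E) (g : G.E) : Prop :=
  ∃ b, g ∉ I b ∧ G.bvec g ∉ SSpan (I b)

def GoodChain (I : Bool → Finset G.E) (l : List G.E) : Prop :=
  (∃ e0, l.head? = some e0 ∧ Unused I e0) ∧ List.Chain' (arc I) l ∧
    ∃ g, l.getLast? = some g ∧ Terminal I g

lemma pair_disj {I : Bool → Finset G.E} (h : GoodPair I) {e : G.E} {b c : Bool}
    (hb : e ∈ I b) (hc : e ∈ I c) (hbc : b ≠ c) : False := by
  cases b <;> cases c <;> simp_all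
  · exact h.1 e hc hb
  · exact h.1 e hb hc

lemma chain'_targets {α : Type*} {R : α → α → Prop} :
    ∀ {l : List α}, List.Chain' R l → ∀ y ∈ l.tail, ∃ x, R x y := by
  intro l
  induction l with
  | nil => intro _ y hy; simp at hy
  | cons a t ih =>
    intro hc y hy
    simp only [List.tail_cons] at hy
    cases t with
    | nil => simp at hy
    | cons a' t' =>
      simp only [List.Chain', List.isChain_cons_cons] at hc
      rcases List.mem_cons.mp hy with rfl | hy'
      · exact ⟨a, hc.1⟩
      · exact ih hc.2 y hy'

/-- the modified pair after a single front-swap -/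
def swapState (I : Bool → Finset G.E) (b : Bool) (e0 e1 : G.E) : Bool → Finset G.E :=
  fun c => if c = b then insert e0 ((I b).erase e1) else I c

section Swap

variable {I : Bool → Finset G.E} {b : Bool} {e0 e1 : G.E}

lemma swapState_other {c : Bool} (hc : c ≠ b) : swapState I b e0 e1 c = I c := by
  simp [swapState, hc]

lemma swapState_self : swapState I b e0 e1 b = insert e0 ((I b).erase e1) := by
  simp [swapState]

variable (hGP : GoodPair I) (hu : Unused I e0)
  (hsp : G.bvec e0 ∈ SSpan (I b)) (he1b : e1 ∈ I b)
  (hns : G.bvec e0 ∉ SSpan ((I b).erase e1))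

include hGP hu hsp he1b hns

lemma swap_sspan : SSpan (swapState I b e0 e1 b) = SSpan (I b) := by
  rw [swapState_self]
  exact (exchange (hGP.2 b) (hu b) hsp he1b hns).2.1

lemma swap_goodPair : GoodPair (swapState I b e0 e1) := by
  constructor
  · intro e het hef
    by_cases hbt : b = true
    · subst hbt
      rw [swapState_self] at het
      rw [swapState_other (by simp)] at hef
      rcases Finset.mem_insert.mp het with rfl | he
      · exact hu false hef
      · exact hGP.1 e (Finset.mem_of_mem_erase he) hef
    · have hbt : b = false := by cases b <;> simp_all
      subst hbt
      rw [swapState_self] at hef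
      rw [swapState_other (by simp)] at het
      rcases Finset.mem_insert.mp hef with rfl | he
      · exact hu true het
      · exact hGP.1 e het (Finset.mem_of_mem_erase he)
  · intro c
    by_cases hc : c = b
    · subst hc
      rw [swapState_self]
      exact (exchange (hGP.2 c) (hu c) hsp he1b hns).1
    · rw [swapState_other hc]; exact hGP.2 c

lemma swap_total : total (swapState I b e0 e1) = total I := by
  have hcard := (exchange (hGP.2 b) (hu b) hsp he1b hns).2.2
  cases b
  · simp only [total, swapState_self, swapState_other (by simp : true ≠ false)]
    rw [hcard]
  · simp only [total, swapState_self, swapState_other (by simp : false ≠ true)]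
    rw [hcard]

lemma swap_arc {x y : G.E} (hxy : arc I x y) (hx : x ≠ e0)
    (hy : ¬ arc I e0 y) : arc (swapState I b e0 e1) x y := by
  obtain ⟨c, hxc, hxsp, hyc, hxns⟩ := hxy
  by_cases hc : c = b
  · subst hc
    have hye1 : y ≠ e1 := by
      rintro rfl
      exact hy ⟨c, hu c, hsp, he1b, hns⟩
    have hye0 : y ≠ e0 := by rintro rfl; exact hu c hyc
    have hspan0 : G.bvec e0 ∈ SSpan ((I c).erase y) := by
      by_contra hcon
      exact hy ⟨c, hu c, hsp, hyc, hcon⟩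
    refine ⟨c, ?_, ?_, ?_, ?_⟩
    · rw [swapState_self]
      intro hmem
      rcases Finset.mem_insert.mp hmem with rfl | hmem
      · exact hx rfl
      · exact hxc (Finset.mem_of_mem_erase hmem)
    · rw [swap_sspan hGP hu hsp he1b hns]; exact hxsp
    · rw [swapState_self]
      exact Finset.mem_insert_of_mem (Finset.mem_erase.mpr ⟨hye1, hyc⟩)
    · intro hcon
      apply hxns
      revert hcon
      apply sspan_le
      intro z hz
      rw [swapState_self] at hz
      rcases Finset.mem_erase.mp hz with ⟨hzy, hz'⟩
      rcases Finset.mem_insert.mp hz' with rfl | hz''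
      · exact hspan0
      · exact mem_sspan_of_mem
          (Finset.mem_erase.mpr ⟨hzy, Finset.mem_of_mem_erase hz''⟩)
  · exact ⟨c, by rwa [swapState_other hc], by rwa [swapState_other hc],
      by rwa [swapState_other hc], by rwa [swapState_other hc]⟩

lemma swap_terminal {g : G.E} (hg : Terminal I g) (hge0 : g ≠ e0) :
    Terminal (swapState I b e0 e1) g := by
  obtain ⟨bt, hgbt, hgsp⟩ := hg
  by_cases hbt : bt = b
  · subst hbt
    refine ⟨bt, ?_, ?_⟩
    · rw [swapState_self]
      intro hmem
      rcases Finset.mem_insert.mp hmem with rfl | hmem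
      · exact hge0 rfl
      · exact hgbt (Finset.mem_of_mem_erase hmem)
    · rw [swap_sspan hGP hu hsp he1b hns]; exact hgsp
  · exact ⟨bt, by rwa [swapState_other hbt], by rwa [swapState_other hbt]⟩

end Swap


lemma chain_transfer {I : Bool → Finset G.E} {b : Bool} {e0 e1 : G.E}
    (hGP : GoodPair I) (hu : Unused I e0)
    (hsp : G.bvec e0 ∈ SSpan (I b)) (he1b : e1 ∈ I b)
    (hns : G.bvec e0 ∉ SSpan ((I b).erase e1)) :
    ∀ (t : List G.E) (x : G.E), x ≠ e0 → List.Chain' (arc I) (x :: t) →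
      (∀ y ∈ t, ¬ arc I e0 y) → (∀ y ∈ t, y ≠ e0) →
      List.Chain' (arc (swapState I b e0 e1)) (x :: t) := by
  intro t
  induction t with
  | nil => intro x _ _ _ _; exact List.isChain_singleton _
  | cons e2 t' iht =>
    intro x hx hchain hshort hne
    simp only [List.Chain', List.isChain_cons_cons] at hchain ⊢
    constructor
    · exact swap_arc hGP hu hsp he1b hns hchain.1 hx
        (hshort e2 List.mem_cons_self)
    · exact iht e2 (hne e2 List.mem_cons_self) hchain.2
        (fun y hy => hshort y (List.mem_cons_of_mem _ hy))
        (fun y hy => hne y (List.mem_cons_of_mem _ hy))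

/-- a good pair admitting an augmenting chain can be improved -/
lemma augment : ∀ (N : ℕ) (l : List G.E), l.length ≤ N →
    ∀ (I : Bool → Finset G.E), GoodPair I → GoodChain I l →
    ∃ I' : Bool → Finset G.E, GoodPair I' ∧ total I' = total I + 1 := by
  intro N
  induction N with
  | zero =>
    intro l hl I _ hGC
    obtain ⟨⟨e0, h0, _⟩, _, _⟩ := hGC
    cases l with
    | nil => simp at h0
    | cons a t => simp at hl
  | succ N ih =>
    intro l hlen I hGP hGC
    cases l with
    | nil =>
      obtain ⟨⟨e0, h0, _⟩, _, _⟩ := hGC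
      simp at h0
    | cons e0 rest =>
      obtain ⟨⟨ex, h0, hu⟩, hchain, g, hg, hterm⟩ := hGC
      simp only [List.head?_cons, Option.some_inj] at h0
      subst h0
      cases rest with
      | nil =>
        -- single element chain: insert it
        simp only [List.getLast?_singleton, Option.some_inj] at hg
        subst hg
        obtain ⟨bt, hgbt, hgsp⟩ := hterm
        refine ⟨fun c => if c = bt then insert e0 (I bt) else I c, ⟨?_, ?_⟩, ?_⟩
        · intro e het hef
          by_cases hb : bt = true
          · subst hb
            simp only [if_pos rfl, if_neg (by simp : false ≠ true)] at het hef
            rcases Finset.mem_insert.mp het with rfl | he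
            · exact hu false hef
            · exact hGP.1 e he hef
          · have hb : bt = false := by cases bt <;> simp_all
            subst hb
            simp only [if_pos rfl, if_neg (by simp : true ≠ false)] at het hef
            rcases Finset.mem_insert.mp hef with rfl | he
            · exact hu true het
            · exact hGP.1 e het he
        · intro c
          by_cases hc : c = bt
          · subst hc
            simp only [if_pos rfl]
            exact indep_insert (hGP.2 c) hgsp
          · simp only [if_neg hc]; exact hGP.2 c
        · have hcard : (insert e0 (I bt)).card = (I bt).card + 1 :=
            Finset.card_insert_of_notMem hgbt
          cases bt
          · simp only [total, if_pos rfl, if_neg (by simp : true ≠ false)]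
            simp only [if_true]
            rw [hcard]; omega
          · simp only [total, if_pos rfl, if_neg (by simp : false ≠ true)]
            simp only [if_true]
            rw [hcard]; omega
      | cons e1 rest' =>
        simp only [List.Chain', List.isChain_cons_cons] at hchain
        obtain ⟨harc, hchain'⟩ := hchain
        by_cases hshort : ∃ f ∈ rest', arc I e0 f
        · -- shortcut: shorter chain
          obtain ⟨f, hf, harcf⟩ := hshort
          obtain ⟨l1, l2, hsplit⟩ := List.append_of_mem hf
          apply ih (e0 :: f :: l2) _ I hGP
          · refine ⟨⟨e0, rfl, hu⟩, ?_, ⟨g, ?_, hterm⟩⟩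
            · simp only [List.Chain', List.isChain_cons_cons]
              refine ⟨harcf, ?_⟩
              apply hchain'.suffix
              rw [hsplit]
              exact (List.suffix_append l1 (f :: l2)).trans (List.suffix_cons e1 _)
            · rw [List.getLast?_cons_cons, hsplit] at hg
              rw [show e1 :: (l1 ++ f :: l2) = (e1 :: l1) ++ (f :: l2) by simp] at hg
              rw [List.getLast?_append_of_ne_nil _ (by simp)] at hg
              rw [List.getLast?_cons_cons]
              exact hg
          · subst hsplit
            simp only [List.length_cons, List.length_append] at hlen ⊢
            omega
        · -- swap at the front
          push_neg at hshort
          obtain ⟨b, he0b, hsp, he1b, hns⟩ := harc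
          have hGP' : GoodPair (swapState I b e0 e1) := swap_goodPair hGP hu hsp he1b hns
          have htot : total (swapState I b e0 e1) = total I :=
            swap_total hGP hu hsp he1b hns
          have htail_ne0 : ∀ y ∈ rest', y ≠ e0 := by
            intro y hy
            obtain ⟨x, hx⟩ := chain'_targets hchain' y (by simpa using hy)
            obtain ⟨c, _, _, hyc, _⟩ := hx
            rintro rfl
            exact hu c hyc
          have hne1 : e1 ≠ e0 := by rintro rfl; exact hu b he1b
          have hGC' : GoodChain (swapState I b e0 e1) (e1 :: rest') := by
            refine ⟨⟨e1, rfl, ?_⟩, ?_, ⟨g, ?_, ?_⟩⟩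
            · -- e1 unused after swap
              intro c
              by_cases hc : c = b
              · subst hc
                rw [swapState_self]
                intro hmem
                rcases Finset.mem_insert.mp hmem with h | h
                · exact hne1 h
                · exact (Finset.mem_erase.mp h).1 rfl
              · rw [swapState_other hc]
                intro hmem
                exact pair_disj hGP he1b hmem (fun h => hc h.symm)
            · -- chain transfer
              exact chain_transfer hGP hu hsp he1b hns rest' e1 hne1 hchain'
                hshort htail_ne0
            · rw [List.getLast?_cons_cons] at hg; exact hg
            · -- terminal transfer
              have hge0 : g ≠ e0 := by
                rw [List.getLast?_cons_cons] at hg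
                obtain ⟨hne, heq⟩ := List.mem_getLast?_eq_getLast
                  (show g ∈ (e1 :: rest').getLast? from hg)
                have hgmem : g ∈ e1 :: rest' := heq ▸ List.getLast_mem hne
                rcases List.mem_cons.mp hgmem with rfl | hgm
                · exact hne1
                · exact htail_ne0 g hgm
              exact swap_terminal hGP hu hsp he1b hns hterm hge0
          obtain ⟨I'', hGP'', htot''⟩ := ih (e1 :: rest') (by
            simp only [List.length_cons] at hlen ⊢; omega) _ hGP' hGC'
          exact ⟨I'', hGP'', by rw [htot'', htot]⟩

end Multigraph

namespace Multigraph

variable {G : Multigraph}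

open Finset

/-- the bona fide `ZMod 2`-span of the boundary vectors of a finset of edges -/
noncomputable def spn (F : Finset G.E) : Submodule (ZMod 2) (G.V → ZMod 2) :=
  Submodule.span (ZMod 2) (G.bvec '' ↑F)

lemma sspan_subset_spn {F : Finset G.E} : SSpan F ⊆ ↑(spn F) := by
  rintro w ⟨J, hJ, rfl⟩
  apply Submodule.sum_mem
  intro e he
  exact Submodule.subset_span ⟨e, hJ he, rfl⟩

lemma spn_subset_sspan {F : Finset G.E} : ↑(spn F) ⊆ SSpan F := by
  intro w hw
  induction hw using Submodule.span_induction with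
  | mem x hx => obtain ⟨e, he, rfl⟩ := hx; exact mem_sspan_of_mem he
  | zero => exact sspan_zero F
  | add x y _ _ hx hy => exact sspan_add hx hy
  | smul c x _ hx =>
    have hc : c = 0 ∨ c = 1 := by revert c; decide
    rcases hc with rfl | rfl
    · simpa using sspan_zero F
    · simpa using hx

lemma mem_spn_iff {F : Finset G.E} {w : G.V → ZMod 2} :
    w ∈ spn F ↔ w ∈ SSpan F :=
  ⟨fun h => spn_subset_sspan h, fun h => sspan_subset_spn h⟩

lemma spn_le_spn_of_sspan {F F' : Finset G.E} (h : SSpan F ⊆ SSpan F') :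
    spn F ≤ spn F' := by
  rw [spn, Submodule.span_le]
  rintro w ⟨e, he, rfl⟩
  exact sspan_subset_spn (h (mem_sspan_of_mem he))

variable (G)

/-- the sum-of-coordinates functional -/
noncomputable def sumFun : (G.V → ZMod 2) →ₗ[ZMod 2] ZMod 2 where
  toFun w := ∑ v, w v
  map_add' x y := by simp [Finset.sum_add_distrib]
  map_smul' c x := by simp [Finset.mul_sum]

/-- even-sum vectors -/
noncomputable def U0 : Submodule (ZMod 2) (G.V → ZMod 2) :=
  LinearMap.ker (sumFun G)

variable {G}

lemma bvec_mem_U0 (e : G.E) : G.bvec e ∈ U0 G := by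
  simp only [U0, LinearMap.mem_ker, sumFun, LinearMap.coe_mk, AddHom.coe_mk]
  unfold bvec
  rw [Finset.sum_add_distrib]
  simp only [Finset.sum_ite_eq, Finset.mem_univ, if_true]
  decide

lemma sspan_subset_U0 {F : Finset G.E} : SSpan F ⊆ ↑(U0 G) := by
  rintro w ⟨J, hJ, rfl⟩
  exact Submodule.sum_mem _ (fun e _ => bvec_mem_U0 e)

lemma finrank_U0 (hn : 1 ≤ Fintype.card G.V) :
    Module.finrank (ZMod 2) (U0 G) = Fintype.card G.V - 1 := by
  have hsurj : LinearMap.range (sumFun G) = ⊤ := by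
    rw [LinearMap.range_eq_top]
    intro c
    obtain ⟨v⟩ := Fintype.card_pos_iff.mp (lt_of_lt_of_le Nat.zero_lt_one hn)
    refine ⟨fun w => if w = v then c else 0, ?_⟩
    simp [sumFun, Finset.sum_ite_eq]
  have := LinearMap.finrank_range_add_finrank_ker (sumFun G)
  rw [hsurj] at this
  have h1 : Module.finrank (ZMod 2) (⊤ : Submodule (ZMod 2) (ZMod 2)) = 1 := by
    rw [finrank_top]; exact Module.finrank_self _
  rw [h1, Module.finrank_pi] at this
  unfold U0
  omega

/-- extract a mathlib linear independence statement from `Indep` -/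
lemma Indep.linearIndependent {F : Finset G.E} (h : Indep F) :
    LinearIndependent (ZMod 2) (fun x : {x // x ∈ F} => G.bvec ↑x) := by
  rw [Fintype.linearIndependent_iff]
  intro g hg
  classical
  set J : Finset G.E :=
    (F.attach.filter (fun x => g x ≠ 0)).image Subtype.val with hJdef
  have hJF : J ⊆ F := by
    intro e he
    simp only [hJdef, Finset.mem_image, Finset.mem_filter] at he
    obtain ⟨x, _, rfl⟩ := he
    exact x.2
  have key : ∑ e ∈ J, G.bvec e = 0 := by
    rw [hJdef,
      Finset.sum_image (fun x _ y _ hxy => Subtype.val_injective hxy),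
      Finset.sum_filter, ← Finset.univ_eq_attach]
    rw [show (∑ x : {x // x ∈ F}, if g x ≠ 0 then G.bvec ↑x else 0)
        = ∑ i, g i • G.bvec ↑i from Finset.sum_congr rfl (fun x _ => by
      have hgx : g x = 0 ∨ g x = 1 := by
        generalize g x = c; revert c; decide
      rcases hgx with h0 | h1
      · simp [h0]
      · simp [h1])]
    exact hg
  have hJ0 := h J hJF key
  intro i
  by_contra hne
  have : (↑i : G.E) ∈ J := by
    rw [hJdef]
    exact Finset.mem_image.mpr ⟨i, Finset.mem_filter.mpr ⟨Finset.mem_attach _ _, hne⟩, rfl⟩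
  rw [hJ0] at this
  simp at this

end Multigraph

namespace Multigraph

variable {G : Multigraph}

open Finset

lemma Indep.card_le {F : Finset G.E} (h : Indep F) (hn : 1 ≤ Fintype.card G.V) :
    F.card ≤ Fintype.card G.V - 1 := by
  have hli : LinearIndependent (ZMod 2)
      (fun x : {x // x ∈ F} => (⟨G.bvec ↑x, bvec_mem_U0 _⟩ : U0 G)) := by
    apply LinearIndependent.of_comp (U0 G).subtype
    exact h.linearIndependent
  have := hli.fintype_card_le_finrank
  rwa [finrank_U0 hn, Fintype.card_coe] at this

lemma Indep.card_eq_finrank {F : Finset G.E} (h : Indep F) :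
    F.card = Module.finrank (ZMod 2) (spn F) := by
  have := finrank_span_eq_card h.linearIndependent
  rw [Fintype.card_coe] at this
  have hr : Set.range (fun x : {x // x ∈ F} => G.bvec ↑x) = G.bvec '' ↑F := by
    rw [show (fun x : {x // x ∈ F} => G.bvec ↑x) = G.bvec ∘ Subtype.val from rfl,
      Set.range_comp, Subtype.range_coe]
  rw [hr] at this
  exact this.symm

lemma rtg_chain {r : G.E → G.E → Prop} {x y : G.E} (h : Relation.ReflTransGen r x y) :
    ∃ l : List G.E, List.Chain' r (x :: l) ∧ (x :: l).getLast? = some y := by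
  induction h using Relation.ReflTransGen.head_induction_on with
  | refl => exact ⟨[], List.isChain_singleton _, by simp⟩
  | head hstep _ ih =>
    obtain ⟨l, hc, hl⟩ := ih
    exact ⟨_ :: l, List.isChain_cons_cons.mpr ⟨hstep, hc⟩,
      by rw [List.getLast?_cons_cons]; exact hl⟩

/-- Nash-Williams style theorem: under the cut condition, there are two
edge-disjoint independent sets whose spans contain all even-sum vectors. -/
theorem exists_spanning_pair (hn : 1 ≤ Fintype.card G.V)
    (hyp : ∀ F : Finset G.E, 2 * (Fintype.card G.V - 1) ≤
      (Finset.univ \ F).card + 2 * Module.finrank (ZMod 2) (spn F)) :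
    ∃ I : Bool → Finset G.E, GoodPair I ∧
      ∀ b, ∀ w ∈ U0 G, w ∈ SSpan (I b) := by
  classical
  -- a maximal good pair
  obtain ⟨I, hI, hmaxw⟩ := Set.Finite.exists_maximalFor total {I : Bool → Finset G.E | GoodPair I}
    (Set.toFinite _) ⟨fun _ => ∅, fun e he => by simp at he, fun b => indep_empty⟩
  simp only [Set.mem_setOf_eq] at hI hmaxw
  have hmax : ∀ I' : Bool → Finset G.E, GoodPair I' → total I' ≤ total I := by
    intro I' hI'
    by_contra hcon
    push_neg at hcon
    have := hmaxw hI' (le_of_lt hcon)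
    omega
  have noAug : ∀ l : List G.E, ¬ GoodChain I l := by
    intro l hGC
    obtain ⟨I', hI', htot⟩ := augment l.length l le_rfl I hI hGC
    have := hmax I' hI'
    omega
  have claim2 : ∀ f : G.E, ∀ b : Bool,
      (∃ e0, Unused I e0 ∧ Relation.ReflTransGen (arc I) e0 f) →
      f ∉ I b → G.bvec f ∈ SSpan (I b) := by
    intro f b ⟨e0, hu, hrtg⟩ hfb
    by_contra hcon
    obtain ⟨l, hc, hl⟩ := rtg_chain hrtg
    exact noAug (e0 :: l) ⟨⟨e0, rfl, hu⟩, hc, f, hl, b, hfb, hcon⟩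
  set A : Finset G.E := Finset.univ.filter
    (fun f => ∃ e0, Unused I e0 ∧ Relation.ReflTransGen (arc I) e0 f) with hA
  have hmemA : ∀ f, f ∈ A ↔
      ∃ e0, Unused I e0 ∧ Relation.ReflTransGen (arc I) e0 f := by
    intro f; simp [hA]
  -- closure property
  have hclos : ∀ f ∈ A, ∀ b : Bool, f ∉ I b → G.bvec f ∈ SSpan ((I b) ∩ A) := by
    intro f hf b hfb
    obtain ⟨J', hJ', hrep⟩ := claim2 f b ((hmemA f).mp hf) hfb
    refine ⟨J', ?_, hrep⟩
    intro g hg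
    rw [Finset.mem_inter]
    refine ⟨hJ' hg, ?_⟩
    rw [hmemA]
    obtain ⟨e0, hu, hrtg⟩ := (hmemA f).mp hf
    refine ⟨e0, hu, hrtg.tail ?_⟩
    exact ⟨b, hfb, ⟨J', hJ', hrep⟩, hJ' hg,
      not_sspan_erase_of_mem_rep (hI.2 b) hJ' hrep hg⟩
  -- spans of A and of J b agree
  have hJA : ∀ b : Bool, SSpan (A : Finset G.E) = SSpan ((I b) ∩ A) := by
    intro b
    apply le_antisymm
    · apply sspan_le
      intro e he
      by_cases heb : e ∈ I b
      · exact mem_sspan_of_mem (Finset.mem_inter.mpr ⟨heb, he⟩)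
      · exact hclos e he b heb
    · exact sspan_mono Finset.inter_subset_right
  have hJcard : ∀ b : Bool, ((I b) ∩ A).card = Module.finrank (ZMod 2) (spn A) := by
    intro b
    rw [((hI.2 b).mono Finset.inter_subset_left).card_eq_finrank,
      show spn ((I b) ∩ A) = spn A from
        le_antisymm (spn_le_spn_of_sspan (le_of_eq (hJA b).symm))
          (spn_le_spn_of_sspan (le_of_eq (hJA b)))]
  -- counting
  have hsub : (Finset.univ \ A) ⊆ ((I true) \ A) ∪ ((I false) \ A) := by
    intro e he
    rw [Finset.mem_sdiff] at he
    by_contra hcon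
    have h1 : e ∉ I true := fun hm =>
      hcon (Finset.mem_union_left _ (Finset.mem_sdiff.mpr ⟨hm, he.2⟩))
    have h2 : e ∉ I false := fun hm =>
      hcon (Finset.mem_union_right _ (Finset.mem_sdiff.mpr ⟨hm, he.2⟩))
    have hu : Unused I e := by
      intro b; cases b
      · exact h2
      · exact h1
    exact he.2 ((hmemA e).mpr ⟨e, hu, Relation.ReflTransGen.refl⟩)
  have hcount : (Finset.univ \ A).card ≤ ((I true) \ A).card + ((I false) \ A).card :=
    le_trans (Finset.card_le_card hsub) (Finset.card_union_le _ _)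
  have e1 : ((I true) ∩ A).card + ((I true) \ A).card = (I true).card :=
    Finset.card_inter_add_card_sdiff _ _
  have e2 : ((I false) ∩ A).card + ((I false) \ A).card = (I false).card :=
    Finset.card_inter_add_card_sdiff _ _
  have h8t : (I true).card ≤ Fintype.card G.V - 1 := (hI.2 true).card_le hn
  have h8f : (I false).card ≤ Fintype.card G.V - 1 := (hI.2 false).card_le hn
  have hhyp := hyp A
  have hJt := hJcard true
  have hJf := hJcard false
  have hitem : (I true).card = Fintype.card G.V - 1 ∧
      (I false).card = Fintype.card G.V - 1 := by omega
  refine ⟨I, hI, ?_⟩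
  intro b w hw
  have hrk : Module.finrank (ZMod 2) (spn (I b)) = Fintype.card G.V - 1 := by
    rw [← (hI.2 b).card_eq_finrank]
    cases b
    · exact hitem.2
    · exact hitem.1
  have hle : spn (I b) ≤ U0 G := by
    rw [spn, Submodule.span_le]
    rintro w' ⟨e, _, rfl⟩
    exact bvec_mem_U0 e
  have heq : spn (I b) = U0 G :=
    Submodule.eq_of_le_of_finrank_le hle (by rw [finrank_U0 hn, hrk])
  exact spn_subset_sspan (heq ▸ hw)

end Multigraph

namespace Multigraph

variable {G : Multigraph}

open Finset

/-- one-step adjacency via an edge of `F` -/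
def stepRel (F : Finset G.E) (a b : G.V) : Prop :=
  ∃ e ∈ F, (G.fst e = a ∧ G.snd e = b) ∨ (G.fst e = b ∧ G.snd e = a)

def Rel (F : Finset G.E) : G.V → G.V → Prop :=
  Relation.ReflTransGen (stepRel F)

lemma stepRel_symm {F : Finset G.E} {a b : G.V} (h : stepRel F a b) : stepRel F b a := by
  obtain ⟨e, he, h1 | h2⟩ := h
  · exact ⟨e, he, Or.inr h1⟩
  · exact ⟨e, he, Or.inl h2⟩

lemma rel_symm {F : Finset G.E} {a b : G.V} (h : Rel F a b) : Rel F b a := by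
  induction h with
  | refl => exact Relation.ReflTransGen.refl
  | tail _ hstep ih =>
    exact Relation.ReflTransGen.trans
      (Relation.ReflTransGen.single (stepRel_symm hstep)) ih

/-- the component setoid of the spanning subgraph `(V, F)` -/
def compSetoid (F : Finset G.E) : Setoid G.V :=
  ⟨Rel F, fun _ => Relation.ReflTransGen.refl, rel_symm,
    Relation.ReflTransGen.trans⟩

/-- a choice of representative of each component -/
noncomputable def rep (F : Finset G.E) (v : G.V) : G.V :=
  Quotient.out (Quotient.mk (compSetoid F) v)

lemma rep_rel (F : Finset G.E) (v : G.V) : Rel F (rep F v) v :=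
  Quotient.mk_out (s := compSetoid F) v

lemma rep_eq_of_rel {F : Finset G.E} {u v : G.V} (h : Rel F u v) :
    rep F u = rep F v := by
  unfold rep
  rw [Quotient.sound (s := compSetoid F) h]

lemma rep_idem (F : Finset G.E) (v : G.V) : rep F (rep F v) = rep F v :=
  rep_eq_of_rel (rep_rel F v)

variable (G) in
/-- indicator vector of a vertex -/
def ind (u : G.V) : G.V → ZMod 2 := fun w => if u = w then 1 else 0

lemma bvec_eq_ind (e : G.E) : G.bvec e = ind G (G.fst e) + ind G (G.snd e) := rfl

lemma pair_mem_sspan {F : Finset G.E} {u v : G.V} (h : Rel F u v) :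
    ind G u + ind G v ∈ SSpan F := by
  induction h with
  | refl => rw [w2_add_self]; exact sspan_zero F
  | tail _ hstep ih =>
    rename_i b c _
    obtain ⟨e, he, hbc | hcb⟩ := hstep
    · have : ind G u + ind G c = (ind G u + ind G b) + G.bvec e := by
        rw [bvec_eq_ind, hbc.1, hbc.2]
        rw [add_assoc, ← add_assoc (ind G b), w2_add_self, zero_add]
      rw [this]
      exact sspan_add ih (mem_sspan_of_mem he)
    · have : ind G u + ind G c = (ind G u + ind G b) + G.bvec e := by
        rw [bvec_eq_ind, hcb.1, hcb.2]
        rw [add_assoc, ← add_assoc (ind G b), add_comm (ind G b), add_assoc,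
          w2_add_self, add_zero]
      rw [this]
      exact sspan_add ih (mem_sspan_of_mem he)

/-- the number of non-representative vertices bounds the rank from below -/
lemma finrank_ge (F : Finset G.E) :
    ∀ (D : Finset G.V), (∀ v ∈ D, rep F v ≠ v) →
    D.card ≤ Module.finrank (ZMod 2) (spn F) := by
  classical
  intro D hD
  have hmem : ∀ v ∈ D, ind G (rep F v) + ind G v ∈ spn F := fun v _ =>
    sspan_subset_spn (pair_mem_sspan (rep_rel F v))
  have hli : LinearIndependent (ZMod 2)
      (fun v : {x // x ∈ D} => (⟨ind G (rep F ↑v) + ind G ↑v, hmem ↑v v.2⟩ : spn F)) := by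
    apply LinearIndependent.of_comp (spn F).subtype
    rw [Fintype.linearIndependent_iff]
    intro g hg i
    by_contra hne
    have hval := congrFun hg (↑i : G.V)
    simp only [Finset.sum_apply, Pi.zero_apply, Submodule.coe_subtype,
      Function.comp_apply] at hval
    rw [Finset.sum_eq_single i] at hval
    · -- the single term
      have hrep_ne : rep F ↑i ≠ ↑i := hD ↑i i.2
      simp [ind, hrep_ne] at hval
      exact hne hval
    · intro v _ hvi
      have h1 : (↑v : G.V) ≠ ↑i := fun hc => hvi (Subtype.ext hc)
      have h2 : rep F ↑v ≠ ↑i := by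
        intro hc
        have : rep F ↑i = ↑i := by
          conv_lhs => rw [← hc]
          rw [rep_idem, hc]
        exact hD ↑i i.2 this
      simp [Pi.smul_apply, ind, if_neg h1, if_neg h2, hvi]
    · intro hni
      exact absurd (Finset.mem_univ i) hni
  have := hli.fintype_card_le_finrank
  rwa [Fintype.card_coe] at this

/-- the 4-edge-connectivity cut hypothesis -/
lemma cut_hypothesis (h : G.EdgeConnected 4) (F : Finset G.E) :
    2 * (Fintype.card G.V - 1) ≤
      (Finset.univ \ F).card + 2 * Module.finrank (ZMod 2) (spn F) := by
  classical
  set R : Finset G.V := Finset.univ.filter (fun v => rep F v = v) with hR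
  set D : Finset G.V := Finset.univ.filter (fun v => rep F v ≠ v) with hD
  have hRD : R.card + D.card = Fintype.card G.V := by
    rw [hR, hD, Finset.card_filter_add_card_filter_not]
    exact Finset.card_univ
  have hrk : D.card ≤ Module.finrank (ZMod 2) (spn F) :=
    finrank_ge F D (fun v hv => (Finset.mem_filter.mp hv).2)
  by_cases hR2 : 2 ≤ R.card
  · -- cut counting
    have hcut : ∀ r ∈ R, 4 ≤ (G.cut (Finset.univ.filter (fun v => rep F v = r))).card := by
      intro r hr
      apply h.2
      · exact ⟨r, Finset.mem_filter.mpr ⟨Finset.mem_univ r, (Finset.mem_filter.mp hr).2⟩⟩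
      · intro hc
        obtain ⟨r', hr', hne⟩ : ∃ r' ∈ R, r' ≠ r := by
          obtain ⟨a, ha, b, hb, hab⟩ := Finset.one_lt_card.mp hR2
          by_cases har : a = r
          · exact ⟨b, hb, fun hbr => hab (by rw [har, hbr])⟩
          · exact ⟨a, ha, har⟩
        have : r' ∈ Finset.univ.filter (fun v => rep F v = r) := by
          rw [hc]; exact Finset.mem_univ r'
        rw [Finset.mem_filter] at this
        exact hne (by rw [← this.2, (Finset.mem_filter.mp hr').2])
    -- each cut edge is outside F
    have hout : ∀ r, (G.cut (Finset.univ.filter (fun v => rep F v = r))) ⊆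
        Finset.univ \ F := by
      intro r e he
      rw [mem_sdiff]
      refine ⟨Finset.mem_univ e, ?_⟩
      intro heF
      have hrel : Rel F (G.fst e) (G.snd e) :=
        Relation.ReflTransGen.single ⟨e, heF, Or.inl ⟨rfl, rfl⟩⟩
      have hrr := rep_eq_of_rel hrel
      unfold cut at he
      rw [Finset.mem_filter, Finset.mem_filter, Finset.mem_filter] at he
      simp only [Finset.mem_univ, true_and] at he
      rcases he with ⟨h1, h2⟩ | ⟨h1, h2⟩
      · exact h2 (by rw [← hrr, h1])
      · exact h1 (by rw [hrr, h2])
    -- counting double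
    have hdouble : ∑ r ∈ R, (G.cut (Finset.univ.filter (fun v => rep F v = r))).card ≤
        2 * (Finset.univ \ F).card := by
      have hcard_eq : ∀ r, (G.cut (Finset.univ.filter (fun v => rep F v = r))).card =
          ∑ e ∈ Finset.univ \ F,
            (if e ∈ G.cut (Finset.univ.filter (fun v => rep F v = r)) then 1 else 0) := by
        intro r
        rw [← Finset.card_filter, Finset.filter_mem_eq_inter,
          Finset.inter_eq_right.mpr (hout r)]
      calc ∑ r ∈ R, (G.cut (Finset.univ.filter (fun v => rep F v = r))).card
          = ∑ r ∈ R, ∑ e ∈ Finset.univ \ F,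
              (if e ∈ G.cut (Finset.univ.filter (fun v => rep F v = r)) then 1 else 0) := by
            exact Finset.sum_congr rfl (fun r _ => hcard_eq r)
        _ = ∑ e ∈ Finset.univ \ F, ∑ r ∈ R,
              (if e ∈ G.cut (Finset.univ.filter (fun v => rep F v = r)) then 1 else 0) :=
            Finset.sum_comm
        _ ≤ ∑ _e ∈ Finset.univ \ F, 2 := by
            apply Finset.sum_le_sum
            intro e _
            rw [← Finset.card_filter]
            calc (R.filter
                (fun r => e ∈ G.cut (Finset.univ.filter (fun v => rep F v = r)))).card
                ≤ ({rep F (G.fst e), rep F (G.snd e)} : Finset G.V).card := by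
                  apply Finset.card_le_card
                  intro r hr
                  rw [Finset.mem_filter] at hr
                  have hc := hr.2
                  unfold cut at hc
                  rw [Finset.mem_filter, Finset.mem_filter, Finset.mem_filter] at hc
                  simp only [Finset.mem_univ, true_and] at hc
                  rcases hc with ⟨h1, _⟩ | ⟨_, h2⟩
                  · exact Finset.mem_insert.mpr (Or.inl h1.symm)
                  · exact Finset.mem_insert.mpr (Or.inr
                      (Finset.mem_singleton.mpr h2.symm))
              _ ≤ 2 := by
                  apply le_trans (Finset.card_insert_le _ _)
                  simp
        _ = 2 * (Finset.univ \ F).card := by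
            rw [Finset.sum_const, smul_eq_mul, mul_comm]
    have hsum : 4 * R.card ≤
        ∑ r ∈ R, (G.cut (Finset.univ.filter (fun v => rep F v = r))).card := by
      rw [mul_comm]
      exact Finset.card_nsmul_le_sum R _ 4 hcut
    omega
  · omega

end Multigraph

namespace Multigraph

variable {G : Multigraph}

open Finset

lemma zmod2_add_eq_zero_iff (a b : ZMod 2) : a + b = 0 ↔ a = b := by
  revert a b; decide

variable (G) in
/-- the boundary operator -/
noncomputable def bd : (G.E → ZMod 2) →ₗ[ZMod 2] (G.V → ZMod 2) where
  toFun ψ := ∑ e, ψ e • G.bvec e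
  map_add' x y := by
    simp only [Pi.add_apply, add_smul]
    rw [Finset.sum_add_distrib]
  map_smul' c x := by
    simp only [Pi.smul_apply, RingHom.id_apply, smul_eq_mul, Finset.smul_sum, mul_smul]

lemma bd_apply (ψ : G.E → ZMod 2) (v : G.V) :
    bd G ψ v = (∑ e ∈ Finset.univ.filter (fun e => G.fst e = v), ψ e) +
      ∑ e ∈ Finset.univ.filter (fun e => G.snd e = v), ψ e := by
  have : bd G ψ v = ∑ e, ψ e * G.bvec e v := by
    simp [bd, Finset.sum_apply]
  rw [this]
  unfold bvec
  simp only [mul_add]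
  rw [Finset.sum_add_distrib]
  congr 1
  · rw [Finset.sum_filter]
    apply Finset.sum_congr rfl
    intro e _
    by_cases hc : G.fst e = v <;> simp [hc]
  · rw [Finset.sum_filter]
    apply Finset.sum_congr rfl
    intro e _
    by_cases hc : G.snd e = v <;> simp [hc]

lemma bd_indicator (J : Finset G.E) :
    bd G (fun e => if e ∈ J then 1 else 0) = ∑ e ∈ J, G.bvec e := by
  simp only [bd, LinearMap.coe_mk, AddHom.coe_mk, ite_smul, one_smul, zero_smul]
  rw [Finset.sum_ite_mem, Finset.univ_inter]

lemma bd_mem_U0 (ψ : G.E → ZMod 2) : bd G ψ ∈ U0 G :=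
  Submodule.sum_mem _ (fun e _ => Submodule.smul_mem _ _ (bvec_mem_U0 e))

lemma isFlow_iff (φ : G.E → ZMod 2 × ZMod 2) :
    G.IsFlow φ ↔ (bd G (fun e => (φ e).1) = 0 ∧ bd G (fun e => (φ e).2) = 0) := by
  constructor
  · intro hf
    constructor <;> [skip; skip] <;>
    · funext v
      rw [bd_apply, Pi.zero_apply, zmod2_add_eq_zero_iff]
      have := hf v
      first
      | · rw [← Prod.fst_sum, ← Prod.fst_sum, this]
      | · rw [← Prod.snd_sum, ← Prod.snd_sum, this]
  · rintro ⟨h1, h2⟩ v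
    have hc1 := congrFun h1 v
    have hc2 := congrFun h2 v
    rw [bd_apply, Pi.zero_apply, zmod2_add_eq_zero_iff] at hc1 hc2
    rw [Prod.ext_iff]
    constructor
    · rw [Prod.fst_sum, Prod.fst_sum]; exact hc1
    · rw [Prod.snd_sum, Prod.snd_sum]; exact hc2

lemma edges_lb (h : G.EdgeConnected 4) : 2 * Fintype.card G.V ≤ Fintype.card G.E := by
  classical
  have hdeg : ∀ v : G.V, 4 ≤ G.degree v := by
    intro v
    have hne : ({v} : Finset G.V) ≠ Finset.univ := by
      obtain ⟨w, hw⟩ := Fintype.exists_ne_of_one_lt_card (lt_of_lt_of_le one_lt_two h.1) v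
      intro hc
      have : w ∈ ({v} : Finset G.V) := hc ▸ Finset.mem_univ w
      exact hw (Finset.mem_singleton.mp this)
    have h4 := h.2 {v} (Finset.singleton_nonempty v) hne
    refine le_trans h4 ?_
    have hsub : G.cut {v} ⊆ (Finset.univ.filter (fun e => G.fst e = v)) ∪
        (Finset.univ.filter (fun e => G.snd e = v)) := by
      intro e he
      unfold cut at he
      rw [Finset.mem_filter] at he
      rcases he.2 with ⟨h1, _⟩ | ⟨_, h2⟩
      · exact Finset.mem_union_left _ (Finset.mem_filter.mpr
          ⟨Finset.mem_univ e, Finset.mem_singleton.mp h1⟩)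
      · exact Finset.mem_union_right _ (Finset.mem_filter.mpr
          ⟨Finset.mem_univ e, Finset.mem_singleton.mp h2⟩)
    calc (G.cut {v}).card ≤ _ := Finset.card_le_card hsub
      _ ≤ _ := Finset.card_union_le _ _
  have hsum : ∑ v : G.V, G.degree v = 2 * Fintype.card G.E := by
    unfold degree
    rw [Finset.sum_add_distrib]
    have h1 : ∑ v : G.V, (Finset.univ.filter (fun e => G.fst e = v)).card
        = Fintype.card G.E := by
      rw [← Finset.card_univ (α := G.E)]
      exact (Finset.card_eq_sum_card_fiberwise (fun e _ => Finset.mem_univ (G.fst e))).symm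
    have h2 : ∑ v : G.V, (Finset.univ.filter (fun e => G.snd e = v)).card
        = Fintype.card G.E := by
      rw [← Finset.card_univ (α := G.E)]
      exact (Finset.card_eq_sum_card_fiberwise (fun e _ => Finset.mem_univ (G.snd e))).symm
    rw [h1, h2]; ring
  have h4n : 4 * Fintype.card G.V ≤ ∑ v : G.V, G.degree v := by
    calc 4 * Fintype.card G.V = ∑ _v : G.V, 4 := by
          rw [Finset.sum_const, Finset.card_univ, smul_eq_mul, mul_comm]
      _ ≤ _ := Finset.sum_le_sum (fun v _ => hdeg v)
  omega

end Multigraph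
open Finset in
open Multigraph in
/-- If `G` is a 4-edge-connected graph with `n` vertices,
then `G` has at least `2 ^ (n/250)` nowhere-zero `ℤ₂ × ℤ₂`-flows. -/
theorem stmt12 (G : Multigraph) (h : G.EdgeConnected 4) :
    (2 : ℝ) ^ ((Fintype.card G.V : ℝ) / 250) ≤
      (Nat.card {φ : G.E → ZMod 2 × ZMod 2 // G.IsFlow φ ∧ G.NowhereZero φ} : ℝ) := by
  classical
  have hn1 : 1 ≤ Fintype.card G.V := le_trans one_le_two h.1
  have hm : 2 * Fintype.card G.V ≤ Fintype.card G.E := edges_lb h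
  -- Nash-Williams style spanning pair
  obtain ⟨I, hGP, hspan⟩ := exists_spanning_pair hn1 (cut_hypothesis h)
  -- the degree-parity vector
  have hσ : (∑ e, G.bvec e) ∈ U0 G :=
    sspan_subset_U0 ⟨Finset.univ, Finset.Subset.refl _, rfl⟩
  obtain ⟨Wt, hWtI, hWt⟩ := hspan true _ hσ
  obtain ⟨Wf, hWfI, hWf⟩ := hspan false _ hσ
  have hdisjW : Disjoint Wt Wf := Finset.disjoint_left.mpr
    (fun {e} het hef => hGP.1 e (hWtI het) (hWfI hef))
  -- three even sets
  have heven : ∀ W : Finset G.E, (∑ e, G.bvec e) = (∑ e ∈ W, G.bvec e) →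
      bd G (fun e => if e ∈ Finset.univ \ W then 1 else 0) = 0 := by
    intro W hW
    rw [bd_indicator, Finset.sum_sdiff_eq_sub (Finset.subset_univ W), ← hW, sub_self]
  have hevenA0 := heven Wt hWt
  have hevenB0 := heven Wf hWf
  have hevenC3 : bd G (fun e => if e ∈ Wt ∪ Wf then 1 else 0) = 0 := by
    rw [bd_indicator, Finset.sum_union hdisjW, ← hWt, ← hWf, w2_add_self]
  -- cardinalities
  have hcards : (Finset.univ \ Wt).card + (Finset.univ \ Wf).card +
      (Wt ∪ Wf).card = 2 * Fintype.card G.E := by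
    rw [Finset.card_sdiff_of_subset (Finset.subset_univ Wt), Finset.card_sdiff_of_subset (Finset.subset_univ Wf),
      Finset.card_union_of_disjoint hdisjW, Finset.card_univ]
    have h1 : Wt.card ≤ Fintype.card G.E := by
      rw [← Finset.card_univ]; exact Finset.card_le_card (Finset.subset_univ _)
    have h2 : Wf.card ≤ Fintype.card G.E := by
      rw [← Finset.card_univ]; exact Finset.card_le_card (Finset.subset_univ _)
    omega
  -- choose the big even set C and a helper even set A1 ⊇ E \ C
  obtain ⟨C, A1, hCe, hA1e, hsubCA1, hCbig⟩ :
      ∃ C A1 : Finset G.E, bd G (fun e => if e ∈ C then 1 else 0) = 0 ∧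
        bd G (fun e => if e ∈ A1 then 1 else 0) = 0 ∧
        (∀ e, e ∉ C → e ∈ A1) ∧ 2 * Fintype.card G.E ≤ 3 * C.card := by
    by_cases h1 : 2 * Fintype.card G.E ≤ 3 * (Finset.univ \ Wt).card
    · refine ⟨Finset.univ \ Wt, Finset.univ \ Wf, hevenA0, hevenB0, ?_, h1⟩
      intro e he
      rw [Finset.mem_sdiff, not_and, not_not] at he
      have het : e ∈ Wt := he (Finset.mem_univ e)
      exact Finset.mem_sdiff.mpr ⟨Finset.mem_univ e,
        Finset.disjoint_left.mp hdisjW het⟩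
    · by_cases h2 : 2 * Fintype.card G.E ≤ 3 * (Finset.univ \ Wf).card
      · refine ⟨Finset.univ \ Wf, Finset.univ \ Wt, hevenB0, hevenA0, ?_, h2⟩
        intro e he
        rw [Finset.mem_sdiff, not_and, not_not] at he
        have hef : e ∈ Wf := he (Finset.mem_univ e)
        exact Finset.mem_sdiff.mpr ⟨Finset.mem_univ e,
          Finset.disjoint_right.mp hdisjW hef⟩
      · refine ⟨Wt ∪ Wf, Finset.univ \ Wt, hevenC3, hevenA0, ?_, by omega⟩
        intro e he
        rw [Finset.mem_union] at he
        push_neg at he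
        exact Finset.mem_sdiff.mpr ⟨Finset.mem_univ e, he.1⟩
  -- the submodule of vectors supported on C
  set SC : Submodule (ZMod 2) (G.E → ZMod 2) :=
    { carrier := {D | ∀ e, e ∉ C → D e = 0}
      add_mem' := by
        intro a b ha hb e he
        simp only [Pi.add_apply, ha e he, hb e he, add_zero]
      zero_mem' := fun e _ => rfl
      smul_mem' := by
        intro c D hD e he
        simp only [Pi.smul_apply, hD e he, smul_eq_mul, mul_zero] } with hSC
  set Φ : SC →+ (G.V → ZMod 2) := ((bd G).comp SC.subtype).toAddMonoidHom with hΦ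
  -- cardinality of SC
  have hSCcard : Nat.card SC = 2 ^ C.card := by
    have hequiv : SC ≃ ({e // e ∈ C} → ZMod 2) := by
      refine ⟨fun D x => D.1 x.1, fun g =>
        ⟨fun e => if hc : e ∈ C then g ⟨e, hc⟩ else 0, fun e he => dif_neg he⟩, ?_, ?_⟩
      · intro D
        apply Subtype.ext
        funext e
        by_cases hc : e ∈ C
        · simp [dif_pos hc]
        · simp only [dif_neg hc]
          exact (D.2 e hc).symm
      · intro g
        funext x
        simp
    rw [Nat.card_congr hequiv, Nat.card_eq_fintype_card, Fintype.card_fun,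
      Fintype.card_coe]
    norm_num
  -- the range of Φ is small
  have hrange : Nat.card Φ.range ≤ 2 ^ (Fintype.card G.V - 1) := by
    have hcardU0 : Nat.card (U0 G) = 2 ^ (Fintype.card G.V - 1) := by
      rw [Nat.card_eq_fintype_card, Module.card_eq_pow_finrank (K := ZMod 2), finrank_U0 hn1]
      norm_num
    rw [← hcardU0]
    apply Nat.card_le_card_of_injective
      (fun x : Φ.range => (⟨x.1, by
        obtain ⟨D, hD⟩ := x.2
        rw [← hD]
        exact bd_mem_U0 _⟩ : U0 G))
    intro x y hxy
    simp only [Subtype.mk.injEq] at hxy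
    exact Subtype.ext hxy
  have hker_eq : Nat.card SC = Nat.card Φ.range * Nat.card Φ.ker := by
    rw [AddSubgroup.card_eq_card_quotient_mul_card_addSubgroup Φ.ker,
      Nat.card_congr (QuotientAddGroup.quotientKerEquivRange Φ).toEquiv]
  -- injection from the kernel into the nowhere-zero flows
  have hflows : Nat.card Φ.ker ≤
      Nat.card {φ : G.E → ZMod 2 × ZMod 2 // G.IsFlow φ ∧ G.NowhereZero φ} := by
    set flowOf : (G.E → ZMod 2) → (G.E → ZMod 2 × ZMod 2) := fun D e =>
      ((if e ∈ A1 then 1 else 0) + D e, if e ∈ C then 1 else 0) with hflowOf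
    have hIsFlow : ∀ D : Φ.ker, G.IsFlow (flowOf D.1.1) := by
      intro D
      rw [isFlow_iff]
      constructor
      · have hDflow : bd G D.1.1 = 0 := by
          have := D.2
          rw [AddMonoidHom.mem_ker] at this
          exact this
        have hsplit : (fun e => (if e ∈ A1 then (1 : ZMod 2) else 0) + D.1.1 e)
            = (fun e => if e ∈ A1 then (1 : ZMod 2) else 0) + D.1.1 := rfl
        show bd G (fun e => (if e ∈ A1 then (1 : ZMod 2) else 0) + D.1.1 e) = 0
        rw [hsplit, map_add, hA1e, hDflow, add_zero]
      · exact hCe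
    have hNZ : ∀ D : Φ.ker, G.NowhereZero (flowOf D.1.1) := by
      intro D e h0
      rw [hflowOf, Prod.ext_iff] at h0
      simp only at h0
      by_cases hc : e ∈ C
      · rw [if_pos hc] at h0
        exact one_ne_zero h0.2
      · rw [if_pos (hsubCA1 e hc)] at h0
        rw [D.1.2 e hc, add_zero] at h0
        exact one_ne_zero h0.1
    apply Nat.card_le_card_of_injective
      (fun D : Φ.ker => (⟨flowOf D.1.1, hIsFlow D, hNZ D⟩ :
        {φ : G.E → ZMod 2 × ZMod 2 // G.IsFlow φ ∧ G.NowhereZero φ}))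
    intro D D' hDD'
    simp only [Subtype.mk.injEq] at hDD'
    apply Subtype.ext
    apply Subtype.ext
    funext e
    have he := congrFun hDD' e
    rw [hflowOf] at he
    have he1 : (if e ∈ A1 then (1 : ZMod 2) else 0) + D.1.1 e
        = (if e ∈ A1 then (1 : ZMod 2) else 0) + D'.1.1 e := congrArg Prod.fst he
    exact add_left_cancel he1
  -- assemble the natural number inequality
  have hmain : 2 ^ C.card ≤ 2 ^ (Fintype.card G.V - 1) *
      Nat.card {φ : G.E → ZMod 2 × ZMod 2 // G.IsFlow φ ∧ G.NowhereZero φ} := by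
    rw [← hSCcard, hker_eq]
    exact Nat.mul_le_mul hrange hflows
  -- final real arithmetic
  set n := Fintype.card G.V with hn
  set Nfl := Nat.card {φ : G.E → ZMod 2 × ZMod 2 // G.IsFlow φ ∧ G.NowhereZero φ} with hNfl
  have hcast : ((2 : ℝ)) ^ (C.card : ℕ) ≤ 2 ^ ((n : ℕ) - 1) * (Nfl : ℝ) := by
    have := hmain
    exact_mod_cast this
  have hexp : (n : ℝ) / 250 + ((n : ℝ) - 1) ≤ (C.card : ℝ) := by
    have h1 : (2 : ℝ) * Fintype.card G.E ≤ 3 * C.card := by exact_mod_cast hCbig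
    have h2 : (2 : ℝ) * n ≤ Fintype.card G.E := by exact_mod_cast hm
    have h3 : (1 : ℝ) ≤ n := by exact_mod_cast hn1
    linarith
  have hpow : (2 : ℝ) ^ ((n : ℝ) / 250) * 2 ^ ((n : ℝ) - 1) ≤
      (Nfl : ℝ) * 2 ^ ((n : ℝ) - 1) := by
    calc (2 : ℝ) ^ ((n : ℝ) / 250) * 2 ^ ((n : ℝ) - 1)
        = 2 ^ ((n : ℝ) / 250 + ((n : ℝ) - 1)) := (Real.rpow_add two_pos _ _).symm
      _ ≤ 2 ^ ((C.card : ℝ)) := Real.rpow_le_rpow_of_exponent_le one_le_two hexp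
      _ = (2 : ℝ) ^ (C.card : ℕ) := Real.rpow_natCast 2 C.card
      _ ≤ 2 ^ ((n : ℕ) - 1) * (Nfl : ℝ) := hcast
      _ = (Nfl : ℝ) * 2 ^ ((n : ℝ) - 1) := by
          rw [mul_comm]
          congr 1
          rw [← Real.rpow_natCast 2 (n - 1), Nat.cast_sub hn1]
          norm_num
  have hposb : (0 : ℝ) < 2 ^ ((n : ℝ) - 1) := Real.rpow_pos_of_pos two_pos _
  exact le_of_mul_le_mul_right hpow hposb
end

section
/- Let k ≥ 1, let G be a k-edge-connected graph with at least 2 vertices, let u be a vertex of G, and let G' be the graph obtained from G by clique expansion with center u. Then G' is k-edge-connected. -/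
namespace Multigraph

variable (G : Multigraph)

/-- The endpoint of `e` other than `u` (equal to `u` itself for a loop at `u`). -/
def otherEnd (e : G.E) (u : G.V) : G.V :=
  if G.fst e = u then G.snd e else G.fst e

theorem otherEnd_ne {G : Multigraph} {e : G.E} {u : G.V}
    (_h1 : G.Inc e u) (h2 : ¬(G.fst e = u ∧ G.snd e = u)) :
    G.otherEnd e u ≠ u := by
  unfold otherEnd
  by_cases hf : G.fst e = u
  · simp only [hf, if_true]
    exact fun hs => h2 ⟨hf, hs⟩
  · simp only [hf, if_false]
    exact hf

instance (e : G.E) (v : G.V) : Decidable (G.Inc e v) :=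
  inferInstanceAs (Decidable (G.fst e = v ∨ G.snd e = v))

/-- The clique expansion of `G` with center `u`: delete all loops at `u`,
subdivide every remaining edge incident with `u` (the set `X` of new
subdivision vertices is indexed by these edges), add all edges of a complete
graph on `X`, and delete `u`.  (The auxiliary enumeration `ord` of `X` is
used only to index each clique edge exactly once.) -/
noncomputable def cliqueExpansion (u : G.V) : Multigraph :=
  let X := {e : G.E // G.Inc e u ∧ ¬(G.fst e = u ∧ G.snd e = u)}
  let ord : X → ℕ := fun x => (Fintype.equivFin X x : ℕ)
  { V := {w : G.V // w ≠ u} ⊕ X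
    E := {e : G.E // ¬G.Inc e u} ⊕ X ⊕ {p : X × X // ord p.1 < ord p.2}
    fintypeV := Fintype.ofFinite _
    decEqV := Classical.decEq _
    fintypeE := Fintype.ofFinite _
    decEqE := Classical.decEq _
    fst := Sum.elim
        (fun e => Sum.inl ⟨G.fst e.val, fun h => e.prop (Or.inl h)⟩)
        (Sum.elim (fun x => Sum.inr x) fun p => Sum.inr p.val.1)
    snd := Sum.elim
        (fun e => Sum.inl ⟨G.snd e.val, fun h => e.prop (Or.inr h)⟩)
        (Sum.elim
          (fun x => Sum.inl ⟨G.otherEnd x.val u, otherEnd_ne x.prop.1 x.prop.2⟩)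
          fun p => Sum.inr p.val.2) }

end Multigraph

namespace Multigraph

lemma mem_cut {G : Multigraph} {A : Finset G.V} {e : G.E} :
    e ∈ G.cut A ↔ (G.fst e ∈ A ∧ G.snd e ∉ A) ∨ (G.fst e ∉ A ∧ G.snd e ∈ A) := by
  simp [cut]

variable (G : Multigraph) (u : G.V)

/-- The set of non-loop edges at `u`, as a type. -/
abbrev Xt := {e : G.E // G.Inc e u ∧ ¬(G.fst e = u ∧ G.snd e = u)}

noncomputable abbrev ordX : Xt G u → ℕ := fun x => (Fintype.equivFin (Xt G u) x : ℕ)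

lemma ordX_inj : Function.Injective (ordX G u) := fun a b h =>
  (Fintype.equivFin (Xt G u)).injective (Fin.ext h)

lemma k_le_cardX {G : Multigraph} {k : ℕ} (u : G.V)
    (hG : G.EdgeConnected k) (hV : 2 ≤ Fintype.card G.V) :
    k ≤ Fintype.card (Xt G u) := by
  classical
  have h1 : ({u} : Finset G.V).Nonempty := ⟨u, Finset.mem_singleton_self u⟩
  have h2 : ({u} : Finset G.V) ≠ Finset.univ := by
    obtain ⟨v, hv⟩ := Fintype.exists_ne_of_one_lt_card (by omega) u
    intro h
    have : v ∈ ({u} : Finset G.V) := h ▸ Finset.mem_univ v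
    exact hv (Finset.mem_singleton.mp this)
  have h3 := hG.2 {u} h1 h2
  have h4 : G.cut {u} = Finset.univ.filter
      (fun e => G.Inc e u ∧ ¬(G.fst e = u ∧ G.snd e = u)) := by
    ext e
    rw [mem_cut, Finset.mem_filter]
    simp only [Finset.mem_univ, true_and, Finset.mem_singleton, Inc]
    tauto
  rw [h4] at h3
  rw [Fintype.card_subtype]
  exact h3

lemma otherEnd_mem_of_cut {G : Multigraph} {u : G.V} {B : Finset G.V} {e : G.E}
    (hInc : G.Inc e u) (hu : u ∉ B) (he : e ∈ G.cut B) : G.otherEnd e u ∈ B := by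
  unfold otherEnd
  split_ifs with hf
  · rw [mem_cut, hf] at he; tauto
  · have hs : G.snd e = u := hInc.resolve_left hf
    rw [mem_cut, hs] at he; tauto

lemma otherEnd_not_mem_of_cut {G : Multigraph} {u : G.V} {B : Finset G.V} {e : G.E}
    (hInc : G.Inc e u) (hu : u ∈ B) (he : e ∈ G.cut B) : G.otherEnd e u ∉ B := by
  unfold otherEnd
  split_ifs with hf
  · rw [mem_cut, hf] at he; tauto
  · have hs : G.snd e = u := hInc.resolve_left hf
    rw [mem_cut, hs] at he; tauto

/-- A canonical clique edge joining `x` and `y` (junk if `x = y`). -/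
noncomputable def cEdge (x y : Xt G u) : (G.cliqueExpansion u).E :=
  if h : ordX G u x < ordX G u y then Sum.inr (Sum.inr ⟨(x, y), h⟩)
  else if h' : ordX G u y < ordX G u x then Sum.inr (Sum.inr ⟨(y, x), h'⟩)
  else Sum.inr (Sum.inl x)

variable {G u}

lemma cEdge_mem {A : Finset (G.cliqueExpansion u).V} {x y : Xt G u}
    (hx : (Sum.inr x : {w : G.V // w ≠ u} ⊕ Xt G u) ∈ A)
    (hy : (Sum.inr y : {w : G.V // w ≠ u} ⊕ Xt G u) ∉ A) :
    cEdge G u x y ∈ (G.cliqueExpansion u).cut A := by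
  have hne : x ≠ y := fun h => hy (h ▸ hx)
  rw [mem_cut]
  unfold cEdge
  by_cases h : ordX G u x < ordX G u y
  · erw [dif_pos h]; exact Or.inl ⟨hx, hy⟩
  by_cases h' : ordX G u y < ordX G u x
  · erw [dif_neg h, dif_pos h']; exact Or.inr ⟨hy, hx⟩
  · exact absurd (ordX_inj G u (by omega)) hne

lemma cEdge_ne_spoke {x y : Xt G u} (hne : x ≠ y) (z : Xt G u) :
    cEdge G u x y ≠ (Sum.inr (Sum.inl z) :
      {e : G.E // ¬G.Inc e u} ⊕ Xt G u ⊕ {p : Xt G u × Xt G u // ordX G u p.1 < ordX G u p.2}) := by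
  unfold cEdge
  by_cases h : ordX G u x < ordX G u y
  · erw [dif_pos h]; intro hc; injection hc with hc2; injection hc2
  by_cases h' : ordX G u y < ordX G u x
  · erw [dif_neg h, dif_pos h']; intro hc; injection hc with hc2; injection hc2
  · exact absurd (ordX_inj G u (by omega)) hne

lemma cEdge_ne_inl {x y : Xt G u}
    (e : {e : G.E // ¬G.Inc e u}) :
    cEdge G u x y ≠ (Sum.inl e :
      {e : G.E // ¬G.Inc e u} ⊕ Xt G u ⊕ {p : Xt G u × Xt G u // ordX G u p.1 < ordX G u p.2}) := by
  unfold cEdge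
  by_cases h : ordX G u x < ordX G u y
  · erw [dif_pos h]; intro hc; injection hc
  by_cases h' : ordX G u y < ordX G u x
  · erw [dif_neg h, dif_pos h']; intro hc; injection hc
  · erw [dif_neg h, dif_neg h']; intro hc; injection hc

lemma cEdge_inj {x y x' y' : Xt G u} (hxy : x ≠ y) (hxy' : x' ≠ y')
    (h : cEdge G u x y = cEdge G u x' y') :
    (x = x' ∧ y = y') ∨ (x = y' ∧ y = x') := by
  unfold cEdge at h
  by_cases h1 : ordX G u x < ordX G u y
  · erw [dif_pos h1] at h
    by_cases h2 : ordX G u x' < ordX G u y'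
    · erw [dif_pos h2] at h
      injection h with h; injection h with h
      have hp := congrArg Subtype.val h
      exact Or.inl ⟨congrArg Prod.fst hp, congrArg Prod.snd hp⟩
    by_cases h3 : ordX G u y' < ordX G u x'
    · erw [dif_neg h2, dif_pos h3] at h
      injection h with h; injection h with h
      have hp := congrArg Subtype.val h
      exact Or.inr ⟨congrArg Prod.fst hp, congrArg Prod.snd hp⟩
    · exact absurd (ordX_inj G u (by omega)) hxy'
  by_cases h3 : ordX G u y < ordX G u x
  · erw [dif_neg h1, dif_pos h3] at h
    by_cases h4 : ordX G u x' < ordX G u y'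
    · erw [dif_pos h4] at h
      injection h with h; injection h with h
      have hp := congrArg Subtype.val h
      exact Or.inr ⟨congrArg Prod.snd hp, congrArg Prod.fst hp⟩
    by_cases h4' : ordX G u y' < ordX G u x'
    · erw [dif_neg h4, dif_pos h4'] at h
      injection h with h; injection h with h
      have hp := congrArg Subtype.val h
      exact Or.inl ⟨congrArg Prod.snd hp, congrArg Prod.fst hp⟩
    · exact absurd (ordX_inj G u (by omega)) hxy'
  · exact absurd (ordX_inj G u (by omega)) hxy

end Multigraph

namespace Multigraph

lemma map_lemma {G : Multigraph} {u : G.V} {k : ℕ} (hG : G.EdgeConnected k)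
    (A : Finset (G.cliqueExpansion u).V) (B : Finset G.V)
    (hB : ∀ (w : G.V) (hw : w ≠ u), w ∈ B ↔
      (Sum.inl ⟨w, hw⟩ : {w : G.V // w ≠ u} ⊕ Xt G u) ∈ A)
    (hBne : B.Nonempty) (hBuniv : B ≠ Finset.univ)
    (x₀ : Xt G u)
    (g : Xt G u → (G.cliqueExpansion u).E)
    (hg : ∀ x : Xt G u, x.val ∈ G.cut B → g x ∈ (G.cliqueExpansion u).cut A)
    (hginj : Function.Injective g)
    (hgr : ∀ (x : Xt G u) (e : {e : G.E // ¬G.Inc e u}), g x ≠ Sum.inl e) :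
    k ≤ ((G.cliqueExpansion u).cut A).card := by
  classical
  have hloop : ∀ e ∈ G.cut B, ¬(G.Inc e u ∧ ¬(G.fst e = u ∧ G.snd e = u)) → ¬G.Inc e u := by
    intro e he h1 hinc
    have hl : G.fst e = u ∧ G.snd e = u := by tauto
    rw [mem_cut, hl.1, hl.2] at he
    tauto
  have key := hG.2 B hBne hBuniv
  refine le_trans key (Finset.card_le_card_of_injOn
    (fun e => if h : G.Inc e u ∧ ¬(G.fst e = u ∧ G.snd e = u) then g ⟨e, h⟩
      else if h' : ¬G.Inc e u then Sum.inl ⟨e, h'⟩ else g x₀) ?_ ?_)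
  · intro e he
    dsimp only
    by_cases h1 : G.Inc e u ∧ ¬(G.fst e = u ∧ G.snd e = u)
    · rw [dif_pos h1]
      exact hg ⟨e, h1⟩ he
    · have hinc := hloop e he h1
      erw [dif_neg h1, dif_pos hinc]
      have hfu : G.fst e ≠ u := fun h => hinc (Or.inl h)
      have hsu : G.snd e ≠ u := fun h => hinc (Or.inr h)
      erw [Finset.mem_coe] at he ⊢
      erw [mem_cut] at he ⊢
      rcases he with ⟨hm1, hm2⟩ | ⟨hm1, hm2⟩
      · exact Or.inl ⟨(hB _ hfu).mp hm1, fun hc => hm2 ((hB _ hsu).mpr hc)⟩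
      · exact Or.inr ⟨fun hc => hm1 ((hB _ hfu).mpr hc), (hB _ hsu).mp hm2⟩
  · intro e1 he1 e2 he2 heq
    simp only [Finset.mem_coe] at he1 he2
    dsimp only at heq
    by_cases h1 : G.Inc e1 u ∧ ¬(G.fst e1 = u ∧ G.snd e1 = u) <;>
      by_cases h2 : G.Inc e2 u ∧ ¬(G.fst e2 = u ∧ G.snd e2 = u)
    · rw [dif_pos h1, dif_pos h2] at heq
      exact congrArg Subtype.val (hginj heq)
    · erw [dif_pos h1, dif_neg h2, dif_pos (hloop e2 he2 h2)] at heq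
      exact absurd heq (hgr _ _)
    · erw [dif_neg h1, dif_pos (hloop e1 he1 h1), dif_pos h2] at heq
      exact absurd heq.symm (hgr _ _)
    · erw [dif_neg h1, dif_pos (hloop e1 he1 h1), dif_neg h2,
        dif_pos (hloop e2 he2 h2)] at heq
      injection heq with h
      exact congrArg Subtype.val h

end Multigraph

open Multigraph

/-- Let `k ≥ 1`, let `G` be a `k`-edge-connected graph with
at least two vertices, and let `u` be a vertex of `G`.  Then the clique
expansion of `G` with center `u` is again `k`-edge-connected. -/
theorem stmt14 (k : ℕ) (hk : 1 ≤ k) (G : Multigraph) (u : G.V)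
    (hG : G.EdgeConnected k) (hV : 2 ≤ Fintype.card G.V) :
    (G.cliqueExpansion u).EdgeConnected k := by
  classical
  have hXcard := Multigraph.k_le_cardX u hG hV
  obtain ⟨x₀⟩ : Nonempty (Xt G u) :=
    Fintype.card_pos_iff.mp (lt_of_lt_of_le hk hXcard)
  obtain ⟨v, hv⟩ := Fintype.exists_ne_of_one_lt_card (by omega : 1 < Fintype.card G.V) u
  constructor
  · exact Fintype.one_lt_card_iff.mpr
      ⟨(Sum.inl ⟨v, hv⟩ : {w : G.V // w ≠ u} ⊕ Xt G u), Sum.inr x₀, fun h => by injection h⟩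
  intro A hAne hAuniv
  set S : Finset (Xt G u) := Finset.univ.filter
    (fun x => (Sum.inr x : {w : G.V // w ≠ u} ⊕ Xt G u) ∈ A) with hSdef
  set T : Finset (Xt G u) := Finset.univ.filter
    (fun x => (Sum.inr x : {w : G.V // w ≠ u} ⊕ Xt G u) ∉ A) with hTdef
  have hmemS : ∀ x : Xt G u, x ∈ S ↔ (Sum.inr x : {w : G.V // w ≠ u} ⊕ Xt G u) ∈ A := by
    intro x; simp [hSdef]
  have hmemT : ∀ x : Xt G u, x ∈ T ↔ (Sum.inr x : {w : G.V // w ≠ u} ⊕ Xt G u) ∉ A := by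
    intro x; simp [hTdef]
  have hST : S.card + T.card = Fintype.card (Xt G u) := by
    have hTS : T = Sᶜ := by
      ext z; simp [hSdef, hTdef]
    have h1 := Finset.card_le_univ S
    rw [hTS, Finset.card_compl]
    omega
  have hdisj : ∀ z : Xt G u, z ∈ S → z ∈ T → False := fun z h1 h2 =>
    (hmemT z).mp h2 ((hmemS z).mp h1)
  by_cases hS0 : S = ∅
  · -- no subdivision vertex lies in A
    have hnotA : ∀ x : Xt G u, (Sum.inr x : {w : G.V // w ≠ u} ⊕ Xt G u) ∉ A := by
      intro x hx
      have := (hmemS x).mpr hx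
      rw [hS0] at this
      exact absurd this (Finset.notMem_empty x)
    set B : Finset G.V := Finset.univ.filter
      (fun w => ∃ hw : w ≠ u, (Sum.inl ⟨w, hw⟩ : {w : G.V // w ≠ u} ⊕ Xt G u) ∈ A) with hBdef
    have hBmem : ∀ (w : G.V) (hw : w ≠ u), w ∈ B ↔
        (Sum.inl ⟨w, hw⟩ : {w : G.V // w ≠ u} ⊕ Xt G u) ∈ A := by
      intro w hw
      rw [hBdef, Finset.mem_filter]
      simp only [Finset.mem_univ, true_and]
      exact ⟨fun ⟨hw', h⟩ => h, fun h => ⟨hw, h⟩⟩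
    have hBu : u ∉ B := by
      intro h
      rw [hBdef, Finset.mem_filter] at h
      obtain ⟨-, hw, -⟩ := h
      exact hw rfl
    have hBne : B.Nonempty := by
      obtain ⟨a, ha⟩ := hAne
      rcases a with ⟨w, hw⟩ | x
      · exact ⟨w, (hBmem w hw).mpr ha⟩
      · exact absurd ha (hnotA x)
    have hBuniv : B ≠ Finset.univ := fun h => hBu (h ▸ Finset.mem_univ u)
    refine Multigraph.map_lemma hG A B hBmem hBne hBuniv x₀
      (fun x => Sum.inr (Sum.inl x)) ?_ ?_ ?_
    · intro x hx
      erw [Multigraph.mem_cut]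
      refine Or.inr ⟨hnotA x, ?_⟩
      exact (hBmem _ (otherEnd_ne x.prop.1 x.prop.2)).mp
        (Multigraph.otherEnd_mem_of_cut x.prop.1 hBu hx)
    · intro x y h
      injection h with h; injection h with h
    · intro x e h; injection h
  by_cases hT0 : T = ∅
  · -- all subdivision vertices lie in A
    have hallA : ∀ x : Xt G u, (Sum.inr x : {w : G.V // w ≠ u} ⊕ Xt G u) ∈ A := by
      intro x
      by_contra hx
      have := (hmemT x).mpr hx
      rw [hT0] at this
      exact absurd this (Finset.notMem_empty x)
    set B : Finset G.V := Finset.univ.filter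
      (fun w => w = u ∨ ∃ hw : w ≠ u, (Sum.inl ⟨w, hw⟩ : {w : G.V // w ≠ u} ⊕ Xt G u) ∈ A)
      with hBdef
    have hBmem : ∀ (w : G.V) (hw : w ≠ u), w ∈ B ↔
        (Sum.inl ⟨w, hw⟩ : {w : G.V // w ≠ u} ⊕ Xt G u) ∈ A := by
      intro w hw
      rw [hBdef, Finset.mem_filter]
      simp only [Finset.mem_univ, true_and]
      constructor
      · rintro (rfl | ⟨hw', h⟩)
        · exact absurd rfl hw
        · exact h
      · intro h; exact Or.inr ⟨hw, h⟩
    have hBu : u ∈ B := by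
      rw [hBdef, Finset.mem_filter]
      exact ⟨Finset.mem_univ u, Or.inl rfl⟩
    have hBne : B.Nonempty := ⟨u, hBu⟩
    have hBuniv : B ≠ Finset.univ := by
      have : ∃ z, z ∉ A := by
        by_contra h
        push_neg at h
        exact hAuniv (Finset.eq_univ_iff_forall.mpr h)
      obtain ⟨z, hz⟩ := this
      rcases z with ⟨w, hw⟩ | x
      · intro h
        exact hz ((hBmem w hw).mp (h ▸ Finset.mem_univ w))
      · exact absurd (hallA x) hz
    refine Multigraph.map_lemma hG A B hBmem hBne hBuniv x₀
      (fun x => Sum.inr (Sum.inl x)) ?_ ?_ ?_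
    · intro x hx
      erw [Multigraph.mem_cut]
      refine Or.inl ⟨hallA x, ?_⟩
      intro hc
      exact (Multigraph.otherEnd_not_mem_of_cut x.prop.1 hBu hx)
        ((hBmem _ (otherEnd_ne x.prop.1 x.prop.2)).mpr hc)
    · intro x y h
      injection h with h; injection h with h
    · intro x e h; injection h
  -- both S and T are nonempty
  obtain ⟨xh, hxhS⟩ := Finset.nonempty_iff_ne_empty.mpr hS0
  obtain ⟨yh, hyhT⟩ := Finset.nonempty_iff_ne_empty.mpr hT0
  have hxA := (hmemS xh).mp hxhS
  have hyA := (hmemT yh).mp hyhT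
  have hxy : xh ≠ yh := fun h => hyA (h ▸ hxA)
  -- the clique edges between S and T
  have hfinj : Set.InjOn (fun p : Xt G u × Xt G u => Multigraph.cEdge G u p.1 p.2)
      ↑(S ×ˢ T) := by
    intro p hp q hq h
    simp only [Finset.coe_product, Set.mem_prod, Finset.mem_coe] at hp hq
    have hp' : p.1 ≠ p.2 := by
      intro h'; exact hdisj p.2 (h' ▸ hp.1) hp.2
    have hq' : q.1 ≠ q.2 := by
      intro h'; exact hdisj q.2 (h' ▸ hq.1) hq.2
    rcases Multigraph.cEdge_inj hp' hq' h with ⟨h1, h2⟩ | ⟨h1, h2⟩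
    · exact Prod.ext h1 h2
    · exfalso; exact hdisj q.2 (h1 ▸ hp.1) hq.2
  have hfmem : ∀ p ∈ S ×ˢ T,
      Multigraph.cEdge G u p.1 p.2 ∈ (G.cliqueExpansion u).cut A := by
    intro p hp
    rw [Finset.mem_product] at hp
    exact Multigraph.cEdge_mem ((hmemS _).mp hp.1) ((hmemT _).mp hp.2)
  set C : Finset (G.cliqueExpansion u).E :=
    @Finset.image _ _ (G.cliqueExpansion u).decEqE
      (fun p : Xt G u × Xt G u => Multigraph.cEdge G u p.1 p.2) (S ×ˢ T) with hCdef
  have hCsub : C ⊆ (G.cliqueExpansion u).cut A := by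
    rw [hCdef]
    exact Finset.image_subset_iff.mpr hfmem
  have hCcard : C.card = S.card * T.card := by
    rw [hCdef, Finset.card_image_of_injOn hfinj, Finset.card_product]
  have hSpos : 1 ≤ S.card := Finset.card_pos.mpr ⟨xh, hxhS⟩
  have hTpos : 1 ≤ T.card := Finset.card_pos.mpr ⟨yh, hyhT⟩
  by_cases hbig : 2 ≤ S.card ∧ 2 ≤ T.card
  · -- enough clique edges
    have h1 : k ≤ S.card * T.card := by nlinarith [hXcard, hST, hbig.1, hbig.2]
    calc k ≤ S.card * T.card := h1
      _ = C.card := hCcard.symm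
      _ ≤ ((G.cliqueExpansion u).cut A).card := Finset.card_le_card hCsub
  have hone : S.card = 1 ∨ T.card = 1 := by omega
  have hspoke_notC : ∀ z : Xt G u,
      (Sum.inr (Sum.inl z) : (G.cliqueExpansion u).E) ∉ C := by
    intro z hzC
    rw [hCdef] at hzC
    obtain ⟨p, hp, hfp⟩ := (@Finset.mem_image _ _ (G.cliqueExpansion u).decEqE _ _ _).mp hzC
    rw [Finset.mem_product] at hp
    have hpne : p.1 ≠ p.2 := by
      intro h'; exact hdisj p.2 (h' ▸ hp.1) hp.2
    exact Multigraph.cEdge_ne_spoke hpne z hfp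
  rcases hone with hSc | hTc
  · -- S = {xh}
    have hSx : ∀ z ∈ S, z = xh := fun z hz =>
      Finset.card_le_one.mp hSc.le z hz xh hxhS
    by_cases hsp : (Sum.inl ⟨G.otherEnd xh.val u, otherEnd_ne xh.prop.1 xh.prop.2⟩ :
        {w : G.V // w ≠ u} ⊕ Xt G u) ∈ A
    · -- other end of xh is in A: use the cut of G at B
      set B : Finset G.V := Finset.univ.filter
        (fun w => ∃ hw : w ≠ u, (Sum.inl ⟨w, hw⟩ : {w : G.V // w ≠ u} ⊕ Xt G u) ∈ A)
        with hBdef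
      have hBmem : ∀ (w : G.V) (hw : w ≠ u), w ∈ B ↔
          (Sum.inl ⟨w, hw⟩ : {w : G.V // w ≠ u} ⊕ Xt G u) ∈ A := by
        intro w hw
        rw [hBdef, Finset.mem_filter]
        simp only [Finset.mem_univ, true_and]
        exact ⟨fun ⟨hw', h⟩ => h, fun h => ⟨hw, h⟩⟩
      have hBu : u ∉ B := by
        intro h
        rw [hBdef, Finset.mem_filter] at h
        obtain ⟨-, hw, -⟩ := h
        exact hw rfl
      have hBne : B.Nonempty :=
        ⟨G.otherEnd xh.val u, (hBmem _ (otherEnd_ne xh.prop.1 xh.prop.2)).mpr hsp⟩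
      have hBuniv : B ≠ Finset.univ := fun h => hBu (h ▸ Finset.mem_univ u)
      refine Multigraph.map_lemma hG A B hBmem hBne hBuniv x₀
        (fun x => if x = xh then Multigraph.cEdge G u xh yh else Sum.inr (Sum.inl x)) ?_ ?_ ?_
      · intro x hx
        dsimp only
        by_cases hxx : x = xh
        · erw [if_pos hxx]
          exact Multigraph.cEdge_mem hxA hyA
        · erw [if_neg hxx, Multigraph.mem_cut]
          refine Or.inr ⟨?_, (hBmem _ (otherEnd_ne x.prop.1 x.prop.2)).mp
            (Multigraph.otherEnd_mem_of_cut x.prop.1 hBu hx)⟩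
          intro hc
          exact hxx (hSx x ((hmemS x).mpr hc))
      · intro x y h
        dsimp only at h
        by_cases hxx : x = xh <;> by_cases hyy : y = xh
        · rw [hxx, hyy]
        · erw [if_pos hxx, if_neg hyy] at h
          exact absurd h (Multigraph.cEdge_ne_spoke hxy y)
        · erw [if_neg hxx, if_pos hyy] at h
          exact absurd h.symm (Multigraph.cEdge_ne_spoke hxy x)
        · erw [if_neg hxx, if_neg hyy] at h
          injection h with h; injection h with h
      · intro x e h
        dsimp only at h
        by_cases hxx : x = xh
        · erw [if_pos hxx] at h
          exact Multigraph.cEdge_ne_inl e h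
        · erw [if_neg hxx] at h
          injection h
    · -- other end of xh is not in A: the spoke of xh crosses as well
      have hsmem : (Sum.inr (Sum.inl xh) : (G.cliqueExpansion u).E) ∈
          (G.cliqueExpansion u).cut A :=
        Multigraph.mem_cut.mpr (Or.inl ⟨hxA, hsp⟩)
      have hins : Finset.cons ((Sum.inr (Sum.inl xh)) : (G.cliqueExpansion u).E) C (hspoke_notC xh) ⊆ (G.cliqueExpansion u).cut A :=
        Finset.cons_subset.mpr ⟨hsmem, hCsub⟩
      have hinscard : (Finset.cons ((Sum.inr (Sum.inl xh)) : (G.cliqueExpansion u).E) C (hspoke_notC xh)).card = C.card + 1 :=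
        Finset.card_cons _
      calc k ≤ S.card + T.card := by omega
        _ = C.card + 1 := by rw [hCcard, hSc]; omega
        _ = (Finset.cons ((Sum.inr (Sum.inl xh)) : (G.cliqueExpansion u).E) C (hspoke_notC xh)).card := hinscard.symm
        _ ≤ ((G.cliqueExpansion u).cut A).card := Finset.card_le_card hins
  · -- T = {yh}
    have hTy : ∀ z ∈ T, z = yh := fun z hz =>
      Finset.card_le_one.mp hTc.le z hz yh hyhT
    by_cases hsp : (Sum.inl ⟨G.otherEnd yh.val u, otherEnd_ne yh.prop.1 yh.prop.2⟩ :
        {w : G.V // w ≠ u} ⊕ Xt G u) ∈ A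
    · -- the spoke of yh crosses as well
      have hsmem : (Sum.inr (Sum.inl yh) : (G.cliqueExpansion u).E) ∈
          (G.cliqueExpansion u).cut A :=
        Multigraph.mem_cut.mpr (Or.inr ⟨hyA, hsp⟩)
      have hins : Finset.cons ((Sum.inr (Sum.inl yh)) : (G.cliqueExpansion u).E) C (hspoke_notC yh) ⊆ (G.cliqueExpansion u).cut A :=
        Finset.cons_subset.mpr ⟨hsmem, hCsub⟩
      have hinscard : (Finset.cons ((Sum.inr (Sum.inl yh)) : (G.cliqueExpansion u).E) C (hspoke_notC yh)).card = C.card + 1 :=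
        Finset.card_cons _
      calc k ≤ S.card + T.card := by omega
        _ = C.card + 1 := by rw [hCcard, hTc]; omega
        _ = (Finset.cons ((Sum.inr (Sum.inl yh)) : (G.cliqueExpansion u).E) C (hspoke_notC yh)).card := hinscard.symm
        _ ≤ ((G.cliqueExpansion u).cut A).card := Finset.card_le_card hins
    · -- other end of yh not in A: use the cut of G at B ∪ {u}
      set B : Finset G.V := Finset.univ.filter
        (fun w => w = u ∨ ∃ hw : w ≠ u,
          (Sum.inl ⟨w, hw⟩ : {w : G.V // w ≠ u} ⊕ Xt G u) ∈ A) with hBdef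
      have hBmem : ∀ (w : G.V) (hw : w ≠ u), w ∈ B ↔
          (Sum.inl ⟨w, hw⟩ : {w : G.V // w ≠ u} ⊕ Xt G u) ∈ A := by
        intro w hw
        rw [hBdef, Finset.mem_filter]
        simp only [Finset.mem_univ, true_and]
        constructor
        · rintro (rfl | ⟨hw', h⟩)
          · exact absurd rfl hw
          · exact h
        · intro h; exact Or.inr ⟨hw, h⟩
      have hBu : u ∈ B := by
        rw [hBdef, Finset.mem_filter]
        exact ⟨Finset.mem_univ u, Or.inl rfl⟩
      have hBne : B.Nonempty := ⟨u, hBu⟩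
      have hBuniv : B ≠ Finset.univ := by
        intro h
        exact hsp ((hBmem _ (otherEnd_ne yh.prop.1 yh.prop.2)).mp
          (h ▸ Finset.mem_univ (G.otherEnd yh.val u)))
      refine Multigraph.map_lemma hG A B hBmem hBne hBuniv x₀
        (fun x => if x = yh then Multigraph.cEdge G u xh yh else Sum.inr (Sum.inl x)) ?_ ?_ ?_
      · intro x hx
        dsimp only
        by_cases hxx : x = yh
        · erw [if_pos hxx]
          exact Multigraph.cEdge_mem hxA hyA
        · erw [if_neg hxx, Multigraph.mem_cut]
          refine Or.inl ⟨?_, ?_⟩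
          · by_contra hc
            exact hxx (hTy x ((hmemT x).mpr hc))
          · intro hc
            exact (Multigraph.otherEnd_not_mem_of_cut x.prop.1 hBu hx)
              ((hBmem _ (otherEnd_ne x.prop.1 x.prop.2)).mpr hc)
      · intro x y h
        dsimp only at h
        by_cases hxx : x = yh <;> by_cases hyy : y = yh
        · rw [hxx, hyy]
        · erw [if_pos hxx, if_neg hyy] at h
          exact absurd h (Multigraph.cEdge_ne_spoke hxy y)
        · erw [if_neg hxx, if_pos hyy] at h
          exact absurd h.symm (Multigraph.cEdge_ne_spoke hxy x)
        · erw [if_neg hxx, if_neg hyy] at h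
          injection h with h; injection h with h
      · intro x e h
        dsimp only at h
        by_cases hxx : x = yh
        · erw [if_pos hxx] at h
          exact Multigraph.cEdge_ne_inl e h
        · erw [if_neg hxx] at h
          injection h
end
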